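/- The following are equivalent: (i) the system of equations d_1 + a_1 + t_2 a_2 + ⋯ + t_{i−1} a_{i−1} = t_i d_i (for i = 2, …, n) together with d_1 + a_1 + t_2 a_2 + ⋯ + t_n a_n = −d_1 admits a rational solution (t_2, …, t_n) ∈ ℚ^{n−1}; (ii) the numbers |a_1 ∧ d_1|, |a_2 ∧ d_2|, …, |a_n ∧ d_n| are all nonzero and commensurate. -/

import Mathlib

open MeasureTheory

/-- The planar wedge (cross) product: `u ∧ v = uₓ v_y − u_y vₓ`. -/
def wedge (u v : ℝ × ℝ) : ℝ := u.1 * v.2 - u.2 * v.1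

/-- The angle in `[0, π)` of the line directed by the nonzero vector `u`. -/
noncomputable def lineAngle (u : ℝ × ℝ) : ℝ :=
  let θ := Complex.arg ⟨u.1, u.2⟩
  if θ < 0 then θ + Real.pi else if θ = Real.pi then 0 else θ

/-- A finite family of real numbers is commensurate if they are all nonzero and all
pairwise ratios are rational. -/
def Commensurate {m : ℕ} (α : Fin m → ℝ) : Prop :=
  (∀ i, α i ≠ 0) ∧ ∀ i j, ∃ q : ℚ, α i = (q : ℝ) * α j

/-- A convex polygon in the plane with `n ≥ 3` vertices listed in counterclockwise order,
no three vertices collinear, no two edges parallel, together with the data describing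
the slope ordering of its edges and, for each edge, the (unique) vertex farthest from
its supporting line.  Edge `i` (in slope order) is the segment from
`vertex (σ i)` to `vertex (σ i + 1)`. -/
structure ConvexPolygonSpokes (n : ℕ) [NeZero n] where
  three_le : 3 ≤ n
  vertex : Fin n → ℝ × ℝ
  /-- every vertex lies strictly to the left of each directed edge: this encodes
  convexity, the counterclockwise orientation, and that no three vertices are collinear -/
  convex_ccw : ∀ i j : Fin n, j ≠ i → j ≠ i + 1 →
    0 < wedge (vertex (i + 1) - vertex i) (vertex j - vertex i)
  /-- no two edges are parallel -/
  no_parallel : ∀ i j : Fin n, i ≠ j →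
    wedge (vertex (i + 1) - vertex i) (vertex (j + 1) - vertex j) ≠ 0
  /-- the permutation re-indexing the edges by slope -/
  σ : Equiv.Perm (Fin n)
  /-- the angles in `[0, π)` of the supporting lines are strictly increasing in slope order -/
  slope_sorted : StrictMono fun i : Fin n => lineAngle (vertex (σ i + 1) - vertex (σ i))
  /-- index of the vertex of the polygon farthest (in Euclidean distance, equivalently in
  the absolute wedge with the edge direction) from the supporting line of the `i`-th edge -/
  wIdx : Fin n → Fin n
  wIdx_farthest : ∀ i j : Fin n, j ≠ wIdx i →
    |wedge (vertex (σ i + 1) - vertex (σ i)) (vertex j - vertex (σ i))| <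
    |wedge (vertex (σ i + 1) - vertex (σ i)) (vertex (wIdx i) - vertex (σ i))|

namespace ConvexPolygonSpokes

variable {n : ℕ} [NeZero n] (P : ConvexPolygonSpokes n)

/-- Direction vector of the `i`-th edge (in slope order). -/
def dir (i : Fin n) : ℝ × ℝ := P.vertex (P.σ i + 1) - P.vertex (P.σ i)

/-- `v i`: the second endpoint of the `i`-th edge in the counterclockwise traversal. -/
def v (i : Fin n) : ℝ × ℝ := P.vertex (P.σ i + 1)

/-- `w i`: the vertex farthest from the supporting line of the `i`-th edge. -/
def w (i : Fin n) : ℝ × ℝ := P.vertex (P.wIdx i)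

/-- The spoke vector of the `i`-th edge: `a i = 2 (w i − v i)`. -/
def a (i : Fin n) : ℝ × ℝ := (2 : ℝ) • (P.w i - P.v i)

/-- `d i`: the unique vector parallel to edge `i` such that `a i + d i` is parallel to
edge `i+1` (written explicitly; it exists and is unique since edges `i` and `i+1`
are not parallel). -/
noncomputable def d (i : Fin n) : ℝ × ℝ :=
  (-(wedge (P.dir (i + 1)) (P.a i)) / wedge (P.dir (i + 1)) (P.dir i)) • P.dir i

/-- The polygon (as a convex body): the convex hull of its vertices. -/
def polygon : Set (ℝ × ℝ) := convexHull ℝ (Set.range P.vertex)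

/-- The closed strip bounded by the supporting line of the `i`-th edge and the parallel
line through the vertex `w i` farthest from it. -/
def strip (i : Fin n) : Set (ℝ × ℝ) :=
  {p | 0 ≤ wedge (P.dir i) (p - P.vertex (P.σ i)) ∧
    wedge (P.dir i) (p - P.vertex (P.σ i)) ≤ wedge (P.dir i) (P.w i - P.vertex (P.σ i))}

/-- `OBStep M N` holds when the outer billiard map is defined at `M ∈ ℝ² ∖ P` — i.e. there
is a vertex `A` of `P` with `(A − M) ∧ (p − M) ≤ 0` for all `p ∈ P`, with equality only
for `p = A` — and `N = 2A − M` is the image of `M`. -/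
def OBStep (M N : ℝ × ℝ) : Prop :=
  M ∉ P.polygon ∧ ∃ k : Fin n,
    (∀ p ∈ P.polygon, wedge (P.vertex k - M) (p - M) ≤ 0) ∧
    (∀ p ∈ P.polygon, wedge (P.vertex k - M) (p - M) = 0 → p = P.vertex k) ∧
    N = (2 : ℝ) • P.vertex k - M

/-- A forward orbit of the outer billiard map. -/
def IsOrbit (M : ℕ → ℝ × ℝ) : Prop := ∀ k : ℕ, P.OBStep (M k) (M (k + 1))

/-- `P` is quasi-rational: the numbers `|a i ∧ a (i+1)|` are nonzero and commensurate. -/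
def QuasiRational : Prop :=
  Commensurate fun i : Fin n => |wedge (P.a i) (P.a (i + 1))|

/-- `P` is rational: all its vertices lie on a lattice of `ℝ²`. -/
def Rational : Prop :=
  ∃ b₁ b₂ : ℝ × ℝ, LinearIndependent ℝ ![b₁, b₂] ∧
    ∀ k : Fin n, ∃ m l : ℤ, P.vertex k = (m : ℝ) • b₁ + (l : ℝ) • b₂

/-- The system `d₁ + a₁ + t₂ a₂ + ⋯ + t_{i−1} a_{i−1} = t_i d_i` (for `i = 2, …, n`),
`d₁ + a₁ + t₂ a₂ + ⋯ + t_n a_n = −d₁` has a rational solution `(t₂, …, t_n)`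
(indices shifted down by one: paper index `i` is `Fin`-index `i − 1`). -/
def SystemHasRatSolution : Prop :=
  ∃ t : Fin n → ℚ,
    (∀ i : Fin n, 0 < i →
      P.d 0 + P.a 0 + ∑ j ∈ Finset.Ioo 0 i, (t j : ℝ) • P.a j = (t i : ℝ) • P.d i) ∧
    P.d 0 + P.a 0 + ∑ j ∈ Finset.Ioi (0 : Fin n), (t j : ℝ) • P.a j = - P.d 0

end ConvexPolygonSpokes


namespace PolyAux

lemma wedge_anti (u v : ℝ × ℝ) : wedge v u = - wedge u v := by simp [wedge]; ring

lemma wedge_self (u : ℝ × ℝ) : wedge u u = 0 := by simp [wedge]; ring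

lemma wedge_smul_right (c : ℝ) (u v : ℝ × ℝ) : wedge u (c • v) = c * wedge u v := by
  simp [wedge, Prod.smul_def, smul_eq_mul]; ring

lemma wedge_smul_left (c : ℝ) (u v : ℝ × ℝ) : wedge (c • u) v = c * wedge u v := by
  simp [wedge, Prod.smul_def, smul_eq_mul]; ring

lemma wedge_add_right (u v w : ℝ × ℝ) : wedge u (v + w) = wedge u v + wedge u w := by
  simp [wedge]; ring

lemma wedge_add_left (u v w : ℝ × ℝ) : wedge (u + v) w = wedge u w + wedge v w := by
  simp [wedge]; ring

lemma wedge_sub_right (u v w : ℝ × ℝ) : wedge u (v - w) = wedge u v - wedge u w := by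
  simp [wedge]; ring

lemma wedge_neg_left (u v : ℝ × ℝ) : wedge (-u) v = - wedge u v := by simp [wedge]; ring

lemma wedge_neg_right (u v : ℝ × ℝ) : wedge u (-v) = - wedge u v := by simp [wedge]; ring

/-- Plücker/Cramer identity in the plane. -/
lemma plucker (u x y z : ℝ × ℝ) :
    wedge u z * wedge x y = wedge u y * wedge x z + wedge x u * wedge y z := by
  simp [wedge]; ring

/-- If `wedge u v = 0` and `u ≠ 0` then `v` is a multiple of `u`. -/
lemma eq_smul_of_wedge_eq_zero {u v : ℝ × ℝ} (h : wedge u v = 0) (hu : u ≠ 0) :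
    ∃ c : ℝ, v = c • u := by
  rcases eq_or_ne u.1 0 with h1 | h1
  · have h2 : u.2 ≠ 0 := by
      intro h2; exact hu (Prod.ext h1 h2)
    refine ⟨v.2 / u.2, ?_⟩
    have hv1 : v.1 = 0 := by
      have : u.1 * v.2 - u.2 * v.1 = 0 := h
      rw [h1] at this
      have : u.2 * v.1 = 0 := by linarith [this]
      rcases mul_eq_zero.mp this with h | h
      · exact absurd h h2
      · exact h
    apply Prod.ext <;> simp [Prod.smul_def, hv1, h1]
    field_simp
  · refine ⟨v.1 / u.1, ?_⟩
    have : u.1 * v.2 - u.2 * v.1 = 0 := h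
    apply Prod.ext <;> simp [Prod.smul_def]
    · field_simp
    · field_simp; nlinarith [this]

/-- upper half plane (closed on positive x-axis) -/
def UH (u : ℝ × ℝ) : Prop := 0 < u.2 ∨ (u.2 = 0 ∧ 0 < u.1)

lemma UH_ne_zero {u : ℝ × ℝ} (h : UH u) : u ≠ 0 := by
  intro h0
  subst h0
  rcases h with h | ⟨h1, h2⟩
  · simp at h
  · simp at h2

lemma UH_neg {u : ℝ × ℝ} (hu : u ≠ 0) (h : ¬ UH u) : UH (-u) := by
  unfold UH at *
  push_neg at h
  obtain ⟨h2, h3⟩ := h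
  rcases lt_trichotomy u.2 0 with hc | hc | hc
  · left; simpa using hc
  · right
    have h1 : u.1 ≠ 0 := fun h1 => hu (Prod.ext h1 hc)
    have h4 := h3 hc
    refine ⟨by simpa using hc, ?_⟩
    simp only [Prod.fst_neg]
    cases h4.lt_or_eq with
    | inl h => linarith
    | inr h => exact absurd h h1
  · exact absurd hc (not_lt.mpr h2)

end PolyAux

section Sec2
open Complex

namespace PolyAux

lemma lineAngle_eq_arg_of_UH {u : ℝ × ℝ} (h : UH u) :
    lineAngle u = Complex.arg ⟨u.1, u.2⟩ := by
  unfold lineAngle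
  simp only
  have him : (⟨u.1, u.2⟩ : ℂ).im = u.2 := rfl
  have h0 : 0 ≤ Complex.arg ⟨u.1, u.2⟩ := by
    rw [Complex.arg_nonneg_iff, him]
    rcases h with h | ⟨h1, _⟩
    · exact h.le
    · exact h1.ge
  have hπ : Complex.arg ⟨u.1, u.2⟩ ≠ Real.pi := by
    intro hp
    obtain ⟨hre, him2⟩ := Complex.arg_eq_pi_iff.mp hp
    rcases h with h2 | ⟨h1, h2⟩
    · rw [him] at him2; linarith
    · change u.1 < 0 at hre; linarith
  rw [if_neg (not_lt.mpr h0), if_neg hπ]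

lemma lineAngle_lt_pi_of_UH {u : ℝ × ℝ} (h : UH u) : lineAngle u < Real.pi := by
  rw [lineAngle_eq_arg_of_UH h]
  rcases (Complex.arg_le_pi _).lt_or_eq with h2 | h2
  · exact h2
  · exfalso
    obtain ⟨hre, him2⟩ := Complex.arg_eq_pi_iff.mp h2
    rcases h with h3 | ⟨h1, h3⟩
    · change u.2 = 0 at him2; linarith
    · change u.1 < 0 at hre; linarith

lemma lineAngle_nonneg_of_UH {u : ℝ × ℝ} (h : UH u) : 0 ≤ lineAngle u := by
  rw [lineAngle_eq_arg_of_UH h, Complex.arg_nonneg_iff]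
  rcases h with h | ⟨h1, _⟩
  · exact h.le
  · exact h1.ge

lemma neg_mk (a b : ℝ) : (⟨-a, -b⟩ : ℂ) = -⟨a, b⟩ := by
  apply Complex.ext <;> simp

lemma lineAngle_neg_of_UH {u : ℝ × ℝ} (h : UH u) : lineAngle (-u) = lineAngle u := by
  have hval : ((-u : ℝ × ℝ).1, (-u : ℝ × ℝ).2) = (-u.1, -u.2) := rfl
  rcases h with h2 | ⟨h1, h2⟩
  · -- 0 < u.2
    have him : (⟨u.1, u.2⟩ : ℂ).im = u.2 := rfl
    have harg : Complex.arg ⟨(-u : ℝ × ℝ).1, (-u : ℝ × ℝ).2⟩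
        = Complex.arg ⟨u.1, u.2⟩ - Real.pi := by
      have : (⟨(-u : ℝ × ℝ).1, (-u : ℝ × ℝ).2⟩ : ℂ) = -⟨u.1, u.2⟩ := by
        apply Complex.ext <;> simp
      rw [this]
      exact Complex.arg_neg_eq_arg_sub_pi_of_im_pos (by rw [him]; exact h2)
    have hlt : Complex.arg ⟨u.1, u.2⟩ < Real.pi := by
      rcases (Complex.arg_le_pi _).lt_or_eq with h3 | h3
      · exact h3
      · exfalso
        obtain ⟨_, him2⟩ := Complex.arg_eq_pi_iff.mp h3
        change u.2 = 0 at him2; linarith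
    unfold lineAngle
    simp only [harg]
    rw [if_pos (by linarith), if_neg (not_lt.mpr (Complex.arg_nonneg_iff.mpr
      (by rw [him]; exact h2.le))), if_neg (ne_of_lt hlt)]
    ring
  · -- u.2 = 0, 0 < u.1
    have harg0 : Complex.arg ⟨u.1, u.2⟩ = 0 := by
      rw [Complex.arg_eq_zero_iff]
      exact ⟨le_of_lt h2, h1⟩
    have hargpi : Complex.arg ⟨(-u : ℝ × ℝ).1, (-u : ℝ × ℝ).2⟩ = Real.pi := by
      rw [Complex.arg_eq_pi_iff]
      constructor
      · change -u.1 < 0; linarith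
      · change -u.2 = 0; rw [h1]; ring
    unfold lineAngle
    simp only [harg0, hargpi]
    have h0π : ¬ (0:ℝ) = Real.pi := Ne.symm Real.pi_ne_zero
    simp [h0π, not_lt.mpr Real.pi_pos.le]

lemma mk_ne_zero_of_ne_zero {u : ℝ × ℝ} (h : u ≠ 0) : (⟨u.1, u.2⟩ : ℂ) ≠ 0 := by
  intro h0
  apply h
  have h1 : u.1 = 0 := congrArg Complex.re h0
  have h2 : u.2 = 0 := congrArg Complex.im h0
  exact Prod.ext h1 h2

lemma wedge_pos_of_UH_lt {x y : ℝ × ℝ} (hx : UH x) (hy : UH y)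
    (h : lineAngle x < lineAngle y) : 0 < wedge x y := by
  set zx : ℂ := ⟨x.1, x.2⟩ with hzx
  set zy : ℂ := ⟨y.1, y.2⟩ with hzy
  have hx1 : ‖zx‖ * Real.cos (Complex.arg zx) = x.1 := Complex.norm_mul_cos_arg zx
  have hx2 : ‖zx‖ * Real.sin (Complex.arg zx) = x.2 := Complex.norm_mul_sin_arg zx
  have hy1 : ‖zy‖ * Real.cos (Complex.arg zy) = y.1 := Complex.norm_mul_cos_arg zy
  have hy2 : ‖zy‖ * Real.sin (Complex.arg zy) = y.2 := Complex.norm_mul_sin_arg zy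
  have hw : wedge x y = ‖zx‖ * ‖zy‖ *
      Real.sin (Complex.arg zy - Complex.arg zx) := by
    rw [Real.sin_sub]
    unfold wedge
    rw [← hx1, ← hx2, ← hy1, ← hy2]
    ring
  rw [hw]
  have hax : 0 < ‖zx‖ := norm_pos_iff.mpr (mk_ne_zero_of_ne_zero (UH_ne_zero hx))
  have hay : 0 < ‖zy‖ := norm_pos_iff.mpr (mk_ne_zero_of_ne_zero (UH_ne_zero hy))
  have hαx := lineAngle_eq_arg_of_UH hx
  have hαy := lineAngle_eq_arg_of_UH hy
  have hsin : 0 < Real.sin (Complex.arg zy - Complex.arg zx) := by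
    apply Real.sin_pos_of_pos_of_lt_pi
    · rw [← hαx, ← hαy]; linarith
    · have := lineAngle_nonneg_of_UH hx
      have := lineAngle_lt_pi_of_UH hy
      rw [← hαx, ← hαy]; linarith
  positivity

lemma wedge_pos_of_lt_of_iff {x y : ℝ × ℝ} (hx : x ≠ 0) (hy : y ≠ 0)
    (h : lineAngle x < lineAngle y) (hiff : UH x ↔ UH y) : 0 < wedge x y := by
  by_cases hux : UH x
  · exact wedge_pos_of_UH_lt hux (hiff.mp hux) h
  · have hux' : UH (-x) := UH_neg hx hux
    have huy' : UH (-y) := UH_neg hy (fun hy' => hux (hiff.mpr hy'))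
    have hx' : lineAngle (-x) = lineAngle x := by
      have := lineAngle_neg_of_UH hux'
      rw [neg_neg] at this; exact this.symm
    have hy' : lineAngle (-y) = lineAngle y := by
      have := lineAngle_neg_of_UH huy'
      rw [neg_neg] at this; exact this.symm
    have := wedge_pos_of_UH_lt hux' huy' (by rw [hx', hy']; exact h)
    have hne : wedge (-x) (-y) = wedge x y := by
      rw [wedge_neg_left, wedge_neg_right]; ring
    linarith [hne ▸ this]

lemma wedge_neg_of_lt_of_not_iff {x y : ℝ × ℝ} (hx : x ≠ 0) (hy : y ≠ 0)
    (h : lineAngle x < lineAngle y) (hiff : ¬ (UH x ↔ UH y)) : wedge x y < 0 := by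
  by_cases hux : UH x
  · have huy : ¬ UH y := fun hy' => hiff ⟨fun _ => hy', fun _ => hux⟩
    have huy' : UH (-y) := UH_neg hy huy
    have hy' : lineAngle (-y) = lineAngle y := by
      have := lineAngle_neg_of_UH huy'
      rw [neg_neg] at this; exact this.symm
    have := wedge_pos_of_UH_lt hux huy' (by rw [hy']; exact h)
    rw [wedge_neg_right] at this
    linarith
  · have huy : UH y := by
      by_contra huy
      exact hiff ⟨fun hx' => absurd hx' hux, fun hy' => absurd hy' huy⟩
    have hux' : UH (-x) := UH_neg hx hux
    have hx' : lineAngle (-x) = lineAngle x := by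
      have := lineAngle_neg_of_UH hux'
      rw [neg_neg] at this; exact this.symm
    have := wedge_pos_of_UH_lt hux' huy (by rw [hx']; exact h)
    rw [wedge_neg_left] at this
    linarith

end PolyAux
end Sec2

namespace ConvexPolygonSpokes
open PolyAux
open Fin.NatCast Fin.CommRing

variable {n : ℕ} [NeZero n] (P : ConvexPolygonSpokes n)

/-- edge vector in the original (boundary) indexing -/
def E (j : Fin n) : ℝ × ℝ := P.vertex (j + 1) - P.vertex j

lemma dir_eq_E (i : Fin n) : P.dir i = P.E (P.σ i) := rfl

lemma n3 (P : ConvexPolygonSpokes n) : 3 ≤ n := P.three_le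

lemma natCast_fin_ne_zero {k : ℕ} (h1 : 0 < k) (h2 : k < n) : (k : Fin n) ≠ 0 := by
  intro h
  rw [Fin.natCast_eq_zero] at h
  exact absurd (Nat.le_of_dvd h1 h) (by omega)

lemma fin_one_ne_zero' (P : ConvexPolygonSpokes n) : (1 : Fin n) ≠ 0 := by
  have h3 := P.n3
  have : ((1 : ℕ) : Fin n) ≠ 0 := natCast_fin_ne_zero (by omega) (by omega)
  simpa using this

lemma fin_two_ne_zero' (P : ConvexPolygonSpokes n) : (2 : Fin n) ≠ 0 := by
  have h3 := P.n3
  have : ((2 : ℕ) : Fin n) ≠ 0 := natCast_fin_ne_zero (by omega) (by omega)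
  simpa using this

lemma add_one_ne (P : ConvexPolygonSpokes n) (j : Fin n) : j + 1 ≠ j := by
  intro h
  exact P.fin_one_ne_zero' (add_eq_left.mp h)

lemma add_two_ne (P : ConvexPolygonSpokes n) (j : Fin n) : j + 2 ≠ j := by
  intro h
  exact P.fin_two_ne_zero' (add_eq_left.mp h)

lemma cx (j k : Fin n) (h1 : k ≠ j) (h2 : k ≠ j + 1) :
    0 < wedge (P.E j) (P.vertex k - P.vertex j) := P.convex_ccw j k h1 h2

lemma np (j k : Fin n) (h : j ≠ k) : wedge (P.E j) (P.E k) ≠ 0 := P.no_parallel j k h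

lemma E_ne_zero (j : Fin n) : P.E j ≠ 0 := by
  intro h0
  have := P.np j (j + 1) (Ne.symm (P.add_one_ne j))
  apply this
  rw [h0]
  simp [wedge]

lemma turn (j : Fin n) : 0 < wedge (P.E j) (P.E (j + 1)) := by
  have h1 : P.E (j + 1) = (P.vertex (j + 2) - P.vertex j) - P.E j := by
    unfold E
    have : j + 1 + 1 = j + 2 := by ring
    rw [this]
    abel
  rw [h1, wedge_sub_right, wedge_self, sub_zero]
  exact P.cx j (j + 2) (P.add_two_ne j) (by
    intro h
    rw [show j + 2 = j + 1 + 1 by ring] at h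
    exact P.add_one_ne (j + 1) h)

/-- local maximizer is a strict global maximizer -/
lemma LG (k : Fin n) (u : ℝ × ℝ) (h1 : wedge u (P.E k) < 0) (h2 : 0 < wedge u (P.E (k - 1)))
    (m : Fin n) (hm : m ≠ k) : wedge u (P.vertex m - P.vertex k) < 0 := by
  by_cases hm1 : m = k + 1
  · subst hm1
    have : P.vertex (k + 1) - P.vertex k = P.E k := rfl
    rw [this]; exact h1
  by_cases hm2 : m = k - 1
  · subst hm2
    have hE : P.E (k - 1) = P.vertex k - P.vertex (k - 1) := by
      unfold E
      congr 1
      ring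
    have : P.vertex (k - 1) - P.vertex k = -(P.E (k - 1)) := by rw [hE]; abel
    rw [this, wedge_neg_right]
    linarith
  · set x := P.E (k - 1)
    set y := P.E k
    set z := P.vertex m - P.vertex k with hz
    have hxy : 0 < wedge x y := by
      have := P.turn (k - 1)
      have he : k - 1 + 1 = k := by ring
      rw [he] at this
      exact this
    have hxz : 0 < wedge x z := by
      have hzz : z = (P.vertex m - P.vertex (k - 1)) - x := by
        simp only [hz, x]
        unfold E
        have : k - 1 + 1 = k := by ring
        rw [this]
        abel
      rw [hzz, wedge_sub_right, wedge_self, sub_zero]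
      exact P.cx (k - 1) m hm2 (by rwa [sub_add_cancel])
    have hyz : 0 < wedge y z := P.cx k m hm hm1
    have hid := plucker u x y z
    have hux : wedge x u < 0 := by
      rw [wedge_anti]; linarith
    nlinarith
end ConvexPolygonSpokes

namespace ConvexPolygonSpokes
open PolyAux
open Fin.NatCast Fin.CommRing

variable {n : ℕ} [NeZero n] (P : ConvexPolygonSpokes n)

/-- `ψ` : signed distance (scaled) of the vertex at offset `k` from edge `i`'s line -/
noncomputable def psiN (i : Fin n) (k : ℕ) : ℝ :=
  wedge (P.dir i) (P.vertex (P.σ i + (k : Fin n)) - P.vertex (P.σ i))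

noncomputable def gN (i : Fin n) (k : ℕ) : ℝ :=
  wedge (P.dir i) (P.E (P.σ i + (k : Fin n)))

/-- offset of the far vertex -/
def Wnat (i : Fin n) : ℕ := (P.wIdx i - P.σ i).val

lemma wedge_zero_right (u : ℝ × ℝ) : wedge u 0 = 0 := by simp [wedge]

lemma psiN_congr (i : Fin n) {k l : ℕ} (h : (k : Fin n) = (l : Fin n)) :
    P.psiN i k = P.psiN i l := by unfold psiN; rw [h]

lemma psiN_zero (i : Fin n) : P.psiN i 0 = 0 := by
  unfold psiN
  rw [Nat.cast_zero, add_zero, sub_self, wedge_zero_right]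

lemma psiN_one (i : Fin n) : P.psiN i 1 = 0 := by
  unfold psiN
  rw [Nat.cast_one]
  exact wedge_self _

lemma psiN_succ (i : Fin n) (k : ℕ) : P.psiN i (k + 1) = P.psiN i k + P.gN i k := by
  unfold psiN gN E
  rw [Nat.cast_add, Nat.cast_one, ← add_assoc, ← wedge_add_right]
  congr 1
  abel

lemma psiN_pos (i : Fin n) (k : ℕ) (h0 : (k : Fin n) ≠ 0) (h1 : (k : Fin n) ≠ 1) :
    0 < P.psiN i k := by
  unfold psiN
  rw [P.dir_eq_E i]
  apply P.cx (P.σ i) (P.σ i + (k : Fin n))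
  · intro h
    exact h0 (add_eq_left.mp h)
  · intro h
    apply h1
    have := add_left_cancel h
    exact this

lemma psiN_nonneg (i : Fin n) (k : ℕ) : 0 ≤ P.psiN i k := by
  by_cases h0 : (k : Fin n) = 0
  · rw [P.psiN_congr i (l := 0) (by simpa using h0), psiN_zero]
  by_cases h1 : (k : Fin n) = 1
  · rw [P.psiN_congr i (l := 1) (by simpa using h1), psiN_one]
  · exact (P.psiN_pos i k h0 h1).le

lemma gN_ne_zero (i : Fin n) (k : ℕ) (h0 : (k : Fin n) ≠ 0) : P.gN i k ≠ 0 := by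
  unfold gN
  rw [P.dir_eq_E i]
  apply P.np
  intro h
  exact h0 (add_eq_left.mp h.symm)

lemma Wfin_ne_zero (i : Fin n) : P.wIdx i - P.σ i ≠ 0 := by
  intro h
  have hw : P.wIdx i = P.σ i := by
    have := sub_eq_zero.mp h
    exact this
  have h2 := P.wIdx_farthest i (P.σ i + 2) (by rw [hw]; exact P.add_two_ne (P.σ i))
  rw [hw, sub_self, wedge_zero_right] at h2
  simp at h2
  exact absurd h2 (not_lt.mpr (abs_nonneg _))

lemma Wfin_ne_one (i : Fin n) : P.wIdx i - P.σ i ≠ 1 := by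
  intro h
  have hw : P.wIdx i = P.σ i + 1 := by
    have : P.wIdx i = 1 + P.σ i := eq_add_of_sub_eq h
    rw [this]; ring
  have h2 := P.wIdx_farthest i (P.σ i + 2) (by
    rw [hw]
    intro hc
    have h21 : (2 : Fin n) = 1 := add_left_cancel hc
    have h10 : (1 : Fin n) = 0 := by linear_combination h21
    exact P.fin_one_ne_zero' h10)
  rw [hw] at h2
  have : P.vertex (P.σ i + 1) - P.vertex (P.σ i) = P.dir i := rfl
  rw [this, wedge_self] at h2
  simp at h2
  exact absurd h2 (not_lt.mpr (abs_nonneg _))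

lemma Wnat_lt (i : Fin n) : P.Wnat i ≤ n - 1 := by
  have := (P.wIdx i - P.σ i).isLt
  unfold Wnat
  omega

lemma Wnat_ge_two (i : Fin n) : 2 ≤ P.Wnat i := by
  have h0 := P.Wfin_ne_zero i
  have h1 := P.Wfin_ne_one i
  have h3 := P.n3
  unfold Wnat
  rcases Nat.lt_or_ge (P.wIdx i - P.σ i).val 2 with h | h
  · exfalso
    rcases (by omega : (P.wIdx i - P.σ i).val = 0 ∨ (P.wIdx i - P.σ i).val = 1) with hv | hv
    · exact h0 (Fin.ext (by rw [hv]; simp))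
    · refine h1 (Fin.ext ?_)
      rw [hv, Fin.val_one']
      rw [Nat.mod_eq_of_lt (by omega)]
  · exact h

lemma cast_Wnat (i : Fin n) : ((P.Wnat i : ℕ) : Fin n) = P.wIdx i - P.σ i :=
  Fin.cast_val_eq_self _

lemma psiN_W_pos (i : Fin n) : 0 < P.psiN i (P.Wnat i) := by
  apply P.psiN_pos
  · rw [cast_Wnat]; exact P.Wfin_ne_zero i
  · rw [cast_Wnat]; exact P.Wfin_ne_one i

lemma psiN_W_max (i : Fin n) (k : ℕ) (h : (k : Fin n) ≠ P.wIdx i - P.σ i) :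
    P.psiN i k < P.psiN i (P.Wnat i) := by
  have hfar := P.wIdx_farthest i (P.σ i + (k : Fin n)) (by
    intro hc
    apply h
    rw [← hc]; ring)
  have hW : P.σ i + ((P.Wnat i : ℕ) : Fin n) = P.wIdx i := by
    rw [cast_Wnat]; ring
  have e1 : |P.psiN i k| = P.psiN i k := abs_of_nonneg (P.psiN_nonneg i k)
  have e2 : P.psiN i (P.Wnat i) = wedge (P.vertex (P.σ i + 1) - P.vertex (P.σ i))
      (P.vertex (P.wIdx i) - P.vertex (P.σ i)) := by
    unfold psiN
    rw [hW]
    rfl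
  have e3 : |P.psiN i k| < |P.psiN i (P.Wnat i)| := by rw [e2]; exact hfar
  rw [e1, abs_of_nonneg (P.psiN_nonneg i _)] at e3
  exact e3

lemma psiN_sum (i : Fin n) (m : ℕ) : P.psiN i m = ∑ t ∈ Finset.range m, P.gN i t := by
  induction m with
  | zero => simp [psiN_zero]
  | succ m ih => rw [psiN_succ, ih, Finset.sum_range_succ]

lemma psiN_sub (i : Fin n) {a b : ℕ} (h : a ≤ b) :
    P.psiN i b - P.psiN i a = ∑ t ∈ Finset.Ico a b, P.gN i t := by
  rw [psiN_sum, psiN_sum, Finset.sum_Ico_eq_sub _ h]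

/-- single sign change of the increments -/
lemma SC (i : Fin n) (j k : ℕ) (hj : 1 ≤ j) (hjk : j < k) (hk : k ≤ n - 1)
    (hgj : P.gN i j < 0) (hgk : 0 < P.gN i k) : False := by
  have h3 := P.n3
  classical
  set T := (Finset.Ioc j k).filter (fun t => 0 < P.gN i t) with hT
  have hkT : k ∈ T := by
    rw [hT, Finset.mem_filter, Finset.mem_Ioc]
    exact ⟨⟨hjk, le_rfl⟩, hgk⟩
  have hTne : T.Nonempty := ⟨k, hkT⟩
  set t := T.min' hTne with ht
  have htT : t ∈ T := Finset.min'_mem T hTne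
  rw [hT, Finset.mem_filter, Finset.mem_Ioc] at htT
  obtain ⟨⟨hjt, htk⟩, hgt⟩ := htT
  have hgt1 : P.gN i (t - 1) < 0 := by
    rcases eq_or_lt_of_le (Nat.succ_le_of_lt hjt) with he | hlt
    · rw [show t - 1 = j by omega]; exact hgj
    · have hmem : t - 1 ∈ Finset.Ioc j k := by
        rw [Finset.mem_Ioc]; omega
      have hnot : t - 1 ∉ T := by
        intro hc
        have := Finset.min'_le T _ hc
        omega
      have : ¬ 0 < P.gN i (t - 1) := by
        intro hc
        exact hnot (by rw [hT, Finset.mem_filter]; exact ⟨hmem, hc⟩)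
      have hne : P.gN i (t - 1) ≠ 0 :=
        P.gN_ne_zero i (t - 1) (natCast_fin_ne_zero (by omega) (by omega))
      cases (not_lt.mp this).lt_or_eq with
      | inl h => exact h
      | inr h => exact absurd h hne
  -- local min at vertex σ i + t : apply LG with u = -(dir i)
  set k₀ : Fin n := P.σ i + (t : Fin n) with hk₀
  have hcast : ((t - 1 : ℕ) : Fin n) = (t : Fin n) - 1 := by
    rw [Nat.cast_sub (by omega)]; simp
  have hidx : P.σ i + ((t - 1 : ℕ) : Fin n) = k₀ - 1 := by rw [hcast, hk₀]; ring
  have hgt' : P.gN i t = wedge (P.dir i) (P.E k₀) := rfl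
  have hgt1' : P.gN i (t - 1) = wedge (P.dir i) (P.E (k₀ - 1)) := by
    unfold gN; rw [hidx]
  have h1 : wedge (-(P.dir i)) (P.E k₀) < 0 := by
    rw [wedge_neg_left, ← hgt']
    linarith
  have h2 : 0 < wedge (-(P.dir i)) (P.E (k₀ - 1)) := by
    rw [wedge_neg_left, ← hgt1']
    linarith
  have hLG := P.LG k₀ (-(P.dir i)) h1 h2 (P.σ i) (by
    intro hc
    rw [hk₀] at hc
    have : (t : Fin n) = 0 := by
      have := add_eq_left.mp hc.symm
      exact this
    exact natCast_fin_ne_zero (by omega) (by omega) this)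
  rw [wedge_neg_left] at hLG
  have hpsit : wedge (P.dir i) (P.vertex (P.σ i) - P.vertex k₀) = - P.psiN i t := by
    unfold psiN
    rw [← wedge_neg_right]
    congr 1
    rw [hk₀]
    abel
  rw [hpsit] at hLG
  have hpos := P.psiN_pos i t (natCast_fin_ne_zero (by omega) (by omega))
    (by
      intro hc
      have hv : ((t : ℕ) : Fin n).val = (1 : Fin n).val := by rw [hc]
      rw [Fin.val_cast_of_lt (show t < n by omega), Fin.val_one'] at hv
      rw [Nat.mod_eq_of_lt (by omega)] at hv
      omega)
  linarith
end ConvexPolygonSpokes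

namespace ConvexPolygonSpokes
open PolyAux
open Fin.NatCast Fin.CommRing

variable {n : ℕ} [NeZero n] (P : ConvexPolygonSpokes n)

lemma U_lemma (i : Fin n) (k : ℕ) (hk1 : 1 ≤ k) (hk2 : k ≤ n - 1) :
    0 < P.gN i k ↔ k < P.Wnat i := by
  have h3 := P.n3
  have hW2 := P.Wnat_ge_two i
  have hWn := P.Wnat_lt i
  constructor
  · intro hg
    by_contra hc
    push_neg at hc   -- Wnat ≤ k
    -- ψ(k+1) < ψ W, so some negative increment in [W, k+1)
    have hlt : P.psiN i (k + 1) < P.psiN i (P.Wnat i) := by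
      apply P.psiN_W_max
      intro hcast
      have hv : ((k + 1 : ℕ) : Fin n).val = (P.wIdx i - P.σ i).val := by rw [hcast]
      by_cases hkn : k + 1 = n
      · rw [hkn] at hv
        simp [Fin.val_cast_of_lt] at hv
        unfold Wnat at *
        omega
      · rw [Fin.val_cast_of_lt (by omega)] at hv
        unfold Wnat at *
        omega
    have hsum : ∑ t ∈ Finset.Ico (P.Wnat i) (k + 1), P.gN i t < 0 := by
      rw [← P.psiN_sub i (by omega : P.Wnat i ≤ k + 1)]
      linarith
    have hex : ∃ t ∈ Finset.Ico (P.Wnat i) (k + 1), P.gN i t < 0 := by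
      by_contra hall
      push_neg at hall
      exact absurd (Finset.sum_nonneg (fun t ht => hall t ht)) (not_le.mpr hsum)
    obtain ⟨t, ht, hgt⟩ := hex
    rw [Finset.mem_Ico] at ht
    have htk : t ≠ k := fun h => by rw [h] at hgt; linarith
    exact P.SC i t k (by omega) (by omega) hk2 hgt hg
  · intro hlt
    rcases lt_trichotomy (P.gN i k) 0 with hg | hg | hg
    · exfalso
      have hpsi : P.psiN i k < P.psiN i (P.Wnat i) := by
        apply P.psiN_W_max
        intro hcast
        have hv : ((k : ℕ) : Fin n).val = (P.wIdx i - P.σ i).val := by rw [hcast]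
        rw [Fin.val_cast_of_lt (by omega)] at hv
        unfold Wnat at *
        omega
      have hsum : 0 < ∑ t ∈ Finset.Ico k (P.Wnat i), P.gN i t := by
        rw [← P.psiN_sub i (by omega : k ≤ P.Wnat i)]
        linarith
      have hex : ∃ t ∈ Finset.Ico k (P.Wnat i), 0 < P.gN i t := by
        by_contra hall
        push_neg at hall
        exact absurd (Finset.sum_nonpos (fun t ht => hall t ht)) (not_le.mpr hsum)
      obtain ⟨t, ht, hgt⟩ := hex
      rw [Finset.mem_Ico] at ht
      have htk : t ≠ k := fun h => by rw [h] at hgt; linarith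
      exact P.SC i k t hk1 (by omega) (by omega) hg hgt
    · exact absurd hg (P.gN_ne_zero i k (natCast_fin_ne_zero (by omega) (by omega)))
    · exact hg

/-- edge-indexed version of unimodality -/
lemma U_edge (i : Fin n) (j : Fin n) (hj : j ≠ P.σ i) :
    0 < wedge (P.dir i) (P.E j) ↔ (j - P.σ i).val < P.Wnat i := by
  have h3 := P.n3
  set k := (j - P.σ i).val with hk
  have hk1 : 1 ≤ k := by
    rcases Nat.eq_zero_or_pos k with h0 | h0
    · exfalso
      apply hj
      have : j - P.σ i = 0 := Fin.ext (by rw [← hk, h0]; simp)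
      have := sub_eq_zero.mp this
      exact this
    · exact h0
  have hkn : k ≤ n - 1 := by
    have := (j - P.σ i).isLt
    omega
  have hEj : P.E j = P.E (P.σ i + (k : Fin n)) := by
    congr 1
    rw [hk, Fin.cast_val_eq_self]
    ring
  rw [hEj]
  exact P.U_lemma i k hk1 hkn

lemma U_edge_neg (i : Fin n) (j : Fin n) (hj : j ≠ P.σ i) :
    wedge (P.dir i) (P.E j) < 0 ↔ P.Wnat i ≤ (j - P.σ i).val := by
  have hne : wedge (P.dir i) (P.E j) ≠ 0 := by
    rw [P.dir_eq_E i]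
    exact P.np _ _ (fun h => hj h.symm)
  have := P.U_edge i j hj
  constructor
  · intro h
    by_contra hc
    push_neg at hc
    linarith [this.mpr hc]
  · intro h
    rcases lt_trichotomy (wedge (P.dir i) (P.E j)) 0 with h1 | h1 | h1
    · exact h1
    · exact absurd h1 hne
    · exact absurd (this.mp h1) (by omega)
end ConvexPolygonSpokes


namespace PolyAux

lemma iff_juggle_A {B C D E F : Prop} (hBC : B ↔ C) (hDE : D ↔ E) :
    ((B ↔ (E ↔ F)) ↔ (C ↔ (D ↔ F))) := by tauto

lemma iff_juggle_A' {B C D E F : Prop} (hb : B) (hc : ¬ C) (hDE : ¬ (D ↔ E)) :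
    ((B ↔ (E ↔ F)) ↔ (C ↔ (D ↔ F))) := by tauto

lemma iff_juggle_B {B C D E F : Prop} (hBC : B ↔ C) (hDE : ¬ (D ↔ E)) :
    ((B ↔ (E ↔ F)) ↔ ¬ (C ↔ (D ↔ F))) := by tauto

lemma iff_juggle_B' {B C D E F : Prop} (hb : B) (hc : ¬ C) (hDE : D ↔ E) :
    ((B ↔ (E ↔ F)) ↔ ¬ (C ↔ (D ↔ F))) := by tauto

end PolyAux

namespace ConvexPolygonSpokes
open PolyAux
open Fin.NatCast Fin.CommRing

variable {n : ℕ} [NeZero n] (P : ConvexPolygonSpokes n)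


/-- the wedge between consecutive (slope-ordered) edge directions -/
noncomputable def XX (i : Fin n) : ℝ := wedge (P.dir i) (P.dir (i + 1))

/-- upper-half-plane flag of a direction -/
def Hd (i : Fin n) : Prop := UH (P.dir i)

lemma dir_ne_zero (i : Fin n) : P.dir i ≠ 0 := by
  rw [P.dir_eq_E]; exact P.E_ne_zero _

lemma sigma_succ_ne (i : Fin n) : P.σ i ≠ P.σ (i + 1) := by
  intro h
  exact P.add_one_ne i (P.σ.injective h).symm

lemma XX_ne_zero (i : Fin n) : P.XX i ≠ 0 := by
  unfold XX
  rw [P.dir_eq_E, P.dir_eq_E]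
  exact P.np _ _ (P.sigma_succ_ne i)

lemma slope_lt {i j : Fin n} (h : i < j) : lineAngle (P.dir i) < lineAngle (P.dir j) :=
  P.slope_sorted h

lemma SGN {i j : Fin n} (hij : i ≠ j) :
    0 < wedge (P.dir i) (P.dir j) ↔ ((i < j) ↔ (P.Hd i ↔ P.Hd j)) := by
  have hne : wedge (P.dir i) (P.dir j) ≠ 0 := by
    rw [P.dir_eq_E, P.dir_eq_E]
    exact P.np _ _ (fun h => hij (P.σ.injective h))
  rcases lt_or_gt_of_ne hij with hlt | hgt
  · by_cases hH : P.Hd i ↔ P.Hd j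
    · have := wedge_pos_of_lt_of_iff (P.dir_ne_zero i) (P.dir_ne_zero j) (P.slope_lt hlt) hH
      constructor
      · intro _; exact ⟨fun _ => hH, fun _ => hlt⟩
      · intro _; exact this
    · have := wedge_neg_of_lt_of_not_iff (P.dir_ne_zero i) (P.dir_ne_zero j) (P.slope_lt hlt) hH
      constructor
      · intro hp; linarith
      · intro hiff; exact absurd (hiff.mp hlt) hH
  · -- j < i
    have hanti : wedge (P.dir i) (P.dir j) = - wedge (P.dir j) (P.dir i) := by
      rw [wedge_anti]
    by_cases hH : P.Hd j ↔ P.Hd i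
    · have := wedge_pos_of_lt_of_iff (P.dir_ne_zero j) (P.dir_ne_zero i) (P.slope_lt hgt) hH
      constructor
      · intro hp; rw [hanti] at hp; linarith
      · intro hiff
        exfalso
        have hij' : ¬ i < j := not_lt.mpr (le_of_lt hgt)
        exact hij' (hiff.mpr ⟨fun a => hH.mpr a, fun a => hH.mp a⟩) |>.elim
    · have := wedge_neg_of_lt_of_not_iff (P.dir_ne_zero j) (P.dir_ne_zero i) (P.slope_lt hgt) hH
      rw [hanti]
      constructor
      · intro _
        constructor
        · intro hlt'; exact absurd hlt' (not_lt.mpr (le_of_lt hgt))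
        · intro hiff; exact absurd ⟨fun a => hiff.mpr a, fun a => hiff.mp a⟩ hH
      · intro _; linarith

lemma succ_order (P : ConvexPolygonSpokes n) (i l : Fin n) (hl1 : l ≠ i) (hl2 : l ≠ i + 1) :
    (i < i + 1 → ((i + 1 < l) ↔ (i < l))) ∧ (¬(i < i + 1) → ((i + 1 < l) ∧ ¬(i < l))) := by
  have h3 := P.n3
  have h1 : (1 : Fin n).val = 1 := by
    rw [Fin.val_one']; exact Nat.mod_eq_of_lt (by omega)
  have hadd : (i + 1).val = (i.val + 1) % n := by rw [Fin.val_add, h1]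
  have hlv : l.val ≠ i.val := fun h => hl1 (Fin.ext h)
  have hlv2 : l.val ≠ (i + 1).val := fun h => hl2 (Fin.ext h)
  have hi := i.isLt
  have hl := l.isLt
  rcases (by omega : i.val + 1 < n ∨ i.val + 1 = n) with hw | hw
  · have hmod : (i.val + 1) % n = i.val + 1 := Nat.mod_eq_of_lt hw
    rw [hmod] at hadd
    simp only [Fin.lt_def, hadd]
    rw [hadd] at hlv2
    omega
  · have hmod : (i.val + 1) % n = 0 := by rw [hw, Nat.mod_self]
    rw [hmod] at hadd
    simp only [Fin.lt_def, hadd]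
    rw [hadd] at hlv2
    omega

lemma CA (i l : Fin n) (hl1 : l ≠ i) (hl2 : l ≠ i + 1) (hX : 0 < P.XX i) :
    (0 < wedge (P.dir (i + 1)) (P.dir l) ↔ 0 < wedge (P.dir i) (P.dir l)) := by
  have hii : i ≠ i + 1 := fun h => P.add_one_ne i h.symm
  have s1 := P.SGN hii
  have s2 := P.SGN (Ne.symm hl1)
  have s3 := P.SGN (Ne.symm hl2)
  have hXiff := s1.mp hX
  obtain ⟨hA, hB⟩ := P.succ_order i l hl1 hl2
  rw [s2, s3]
  by_cases hw : i < i + 1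
  · exact iff_juggle_A (hA hw) (hXiff.mp hw)
  · obtain ⟨hb, hc⟩ := hB hw
    exact iff_juggle_A' hb hc (fun h => hw (hXiff.mpr h))

lemma CB (i l : Fin n) (hl1 : l ≠ i) (hl2 : l ≠ i + 1) (hX : P.XX i < 0) :
    (0 < wedge (P.dir (i + 1)) (P.dir l) ↔ wedge (P.dir i) (P.dir l) < 0) := by
  have hii : i ≠ i + 1 := fun h => P.add_one_ne i h.symm
  have s1 := P.SGN hii
  have s2 := P.SGN (Ne.symm hl1)
  have s3 := P.SGN (Ne.symm hl2)
  have hne2 : wedge (P.dir i) (P.dir l) ≠ 0 := by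
    rw [P.dir_eq_E, P.dir_eq_E]
    exact P.np _ _ (fun h => hl1 (P.σ.injective h).symm)
  have hXiff : ¬ ((i < i + 1) ↔ (P.Hd i ↔ P.Hd (i + 1))) := by
    intro h
    have := s1.mpr h
    unfold XX at hX
    linarith
  have hlt_iff : wedge (P.dir i) (P.dir l) < 0 ↔ ¬ ((i < l) ↔ (P.Hd i ↔ P.Hd l)) := by
    constructor
    · intro h hiff
      have := s2.mpr hiff
      linarith
    · intro h
      rcases lt_trichotomy (wedge (P.dir i) (P.dir l)) 0 with h1 | h1 | h1
      · exact h1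
      · exact absurd h1 hne2
      · exact absurd (s2.mp h1) h
  rw [s3, hlt_iff]
  obtain ⟨hA, hB⟩ := P.succ_order i l hl1 hl2
  by_cases hw : i < i + 1
  · exact iff_juggle_B (hA hw) (fun h => hXiff ⟨fun _ => h, fun _ => hw⟩)
  · obtain ⟨hb, hc⟩ := hB hw
    refine iff_juggle_B' hb hc ?_
    by_contra h
    exact hXiff ⟨fun hlt => absurd hlt hw, fun hiff => absurd hiff h⟩

/-- helper: value of a negated nonzero element -/
lemma val_neg' (x : Fin n) (h : x ≠ 0) : (-x).val = n - x.val := by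
  have hx : 1 ≤ x.val := by
    rcases Nat.eq_zero_or_pos x.val with h0 | h0
    · exact absurd (Fin.ext (by simp [h0])) h
    · exact h0
  have hlt := x.isLt
  have : -x = ((n - x.val : ℕ) : Fin n) := by
    rw [Nat.cast_sub hlt.le]
    simp
  rw [this, Fin.val_cast_of_lt (by omega)]

/-- helper: value of `x - 1` -/
lemma sub_one_val (x : Fin n) (h : 1 ≤ x.val) : (x - 1).val = x.val - 1 := by
  have hlt := x.isLt
  have : x - 1 = ((x.val - 1 : ℕ) : Fin n) := by
    rw [Nat.cast_sub h, Fin.cast_val_eq_self]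
    simp
  rw [this, Fin.val_cast_of_lt (by omega)]

end ConvexPolygonSpokes

namespace ConvexPolygonSpokes
open PolyAux
open Fin.NatCast Fin.CommRing

variable {n : ℕ} [NeZero n] (P : ConvexPolygonSpokes n)

lemma one_val (P : ConvexPolygonSpokes n) : (1 : Fin n).val = 1 := by
  have h3 := P.n3
  rw [Fin.val_one']
  exact Nat.mod_eq_of_lt (by omega)

lemma wIdx_eq (i : Fin n) : P.σ i + ((P.Wnat i : ℕ) : Fin n) = P.wIdx i := by
  rw [P.cast_Wnat]; ring

lemma ne_of_diff_val_pos {a b : Fin n} (h : 1 ≤ (a - b).val) : a ≠ b := by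
  intro he
  rw [he, sub_self] at h
  simp at h

lemma dirsucc_eq (i : Fin n) : P.dir (i + 1) = P.E (P.σ (i + 1)) := rfl

lemma SA (i : Fin n) (hX : 0 < P.XX i) :
    P.σ (i + 1) = P.σ i + 1 ∧ P.wIdx (i + 1) = P.wIdx i := by
  have h3 := P.n3
  set S := P.σ i with hS
  set M := P.σ (i + 1) with hM
  have hMS : M ≠ S := Ne.symm (P.sigma_succ_ne i)
  have hW2 := P.Wnat_ge_two i
  have hWn := P.Wnat_lt i
  have hW2' := P.Wnat_ge_two (i + 1)
  have hWn' := P.Wnat_lt (i + 1)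
  set W := P.Wnat i with hW
  set W' := P.Wnat (i + 1) with hW'
  have hmem : (M - S).val < W := (P.U_edge i M hMS).mp hX
  have hMSv1 : 1 ≤ (M - S).val := by
    rcases Nat.eq_zero_or_pos (M - S).val with h0 | h0
    · exact absurd (sub_eq_zero.mp (Fin.ext (by simp [h0]))) hMS
    · exact h0
  -- step 1 : M = S + 1
  have hA : M = S + 1 := by
    by_contra hne
    have hval1 : (M - S).val ≠ 1 := by
      intro h
      apply hne
      have h1 : M - S = 1 := Fin.ext (by rw [h, P.one_val])
      have : M = 1 + S := eq_add_of_sub_eq h1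
      rw [this]; ring
    have hge2 : 2 ≤ (M - S).val := by omega
    set j := M - 1 with hj
    have hjS : j - S = (M - S) - 1 := by rw [hj]; ring
    have hjSval : (j - S).val = (M - S).val - 1 := by
      rw [hjS]; exact sub_one_val _ (by omega)
    have hjneS : j ≠ S := ne_of_diff_val_pos (by omega)
    have hjneM : j ≠ M := by
      intro h
      apply P.fin_one_ne_zero'
      rw [hj] at h
      linear_combination -h
    have hpos1 : 0 < wedge (P.dir i) (P.E j) :=
      (P.U_edge i j hjneS).mpr (show (j - S).val < W by omega)
    set l := P.σ.symm j with hl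
    have hlE : P.σ l = j := P.σ.apply_symm_apply j
    have hl1 : l ≠ i := fun h => hjneS (by rw [← hlE, h])
    have hl2 : l ≠ i + 1 := fun h => hjneM (by rw [← hlE, h])
    have hpos2 : 0 < wedge (P.dir (i + 1)) (P.E j) := by
      have hdl : P.dir l = P.E j := by rw [P.dir_eq_E, hlE]
      have := (P.CA i l hl1 hl2 hX).mpr (by rw [hdl]; exact hpos1)
      rw [hdl] at this
      exact this
    have hjM : (j - M).val = n - 1 := by
      have hjm : j - M = -1 := by rw [hj]; ring
      rw [hjm]
      rw [val_neg' 1 (P.fin_one_ne_zero'), P.one_val]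
    have hfin : (j - M).val < W' := (P.U_edge (i + 1) j hjneM).mp hpos2
    omega
  -- step 2a : W' ≤ W - 1
  set j0 := P.wIdx i with hj0
  have hj0S : (j0 - S).val = W := rfl
  have hj0neS : j0 ≠ S := ne_of_diff_val_pos (by omega)
  have hj0M : (j0 - M).val = W - 1 := by
    have : j0 - M = (j0 - S) - 1 := by rw [hA]; ring
    rw [this, sub_one_val _ (by omega), hj0S]
  have hj0neM : j0 ≠ M := ne_of_diff_val_pos (by omega)
  have hneg1 : wedge (P.dir i) (P.E j0) < 0 :=
    (P.U_edge_neg i j0 hj0neS).mpr (show W ≤ (j0 - S).val by omega)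
  have hneg2 : wedge (P.dir (i + 1)) (P.E j0) < 0 := by
    set l := P.σ.symm j0 with hl
    have hlE : P.σ l = j0 := P.σ.apply_symm_apply j0
    have hl1 : l ≠ i := fun h => hj0neS (by rw [← hlE, h])
    have hl2 : l ≠ i + 1 := fun h => hj0neM (by rw [← hlE, h])
    have hdl : P.dir l = P.E j0 := by rw [P.dir_eq_E, hlE]
    have hiff := P.CA i l hl1 hl2 hX
    rw [hdl] at hiff
    have hne : wedge (P.dir (i + 1)) (P.E j0) ≠ 0 := by
      rw [P.dirsucc_eq]
      exact P.np _ _ (Ne.symm hj0neM)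
    rcases lt_trichotomy (wedge (P.dir (i + 1)) (P.E j0)) 0 with h | h | h
    · exact h
    · exact absurd h hne
    · linarith [hiff.mp h]
  have hWle : W' ≤ W - 1 := by
    have hle : W' ≤ (j0 - M).val := (P.U_edge_neg (i + 1) j0 hj0neM).mp hneg2
    omega
  have hW3 : 3 ≤ W := by omega
  -- step 2b : W - 2 < W'
  set j1 := S + ((W - 1 : ℕ) : Fin n) with hj1
  have hj1S : (j1 - S).val = W - 1 := by
    have : j1 - S = ((W - 1 : ℕ) : Fin n) := by rw [hj1]; ring
    rw [this, Fin.val_cast_of_lt (by omega)]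
  have hj1neS : j1 ≠ S := ne_of_diff_val_pos (by omega)
  have hj1M : (j1 - M).val = W - 2 := by
    have : j1 - M = (j1 - S) - 1 := by rw [hA]; ring
    rw [this, sub_one_val _ (by omega), hj1S]
    omega
  have hj1neM : j1 ≠ M := ne_of_diff_val_pos (by omega)
  have hpos1 : 0 < wedge (P.dir i) (P.E j1) :=
    (P.U_edge i j1 hj1neS).mpr (show (j1 - S).val < W by omega)
  have hpos2 : 0 < wedge (P.dir (i + 1)) (P.E j1) := by
    set l := P.σ.symm j1 with hl
    have hlE : P.σ l = j1 := P.σ.apply_symm_apply j1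
    have hl1 : l ≠ i := fun h => hj1neS (by rw [← hlE, h])
    have hl2 : l ≠ i + 1 := fun h => hj1neM (by rw [← hlE, h])
    have hdl : P.dir l = P.E j1 := by rw [P.dir_eq_E, hlE]
    have hiff := P.CA i l hl1 hl2 hX
    rw [hdl] at hiff
    exact hiff.mpr hpos1
  have hWgt : W - 2 < W' := by
    have hlt : (j1 - M).val < W' := (P.U_edge (i + 1) j1 hj1neM).mp hpos2
    omega
  have hW'eq : W' = W - 1 := by omega
  refine ⟨hA, ?_⟩
  have e1 : P.wIdx (i + 1) = M + ((W' : ℕ) : Fin n) := (P.wIdx_eq (i + 1)).symm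
  have e2 : j0 = S + ((W : ℕ) : Fin n) := (P.wIdx_eq i).symm
  rw [e1, e2, hW'eq, hA]
  have hcast : ((W - 1 : ℕ) : Fin n) = ((W : ℕ) : Fin n) - 1 := by
    rw [Nat.cast_sub (by omega)]
    simp
  rw [hcast]
  ring

lemma SB (i : Fin n) (hX : P.XX i < 0) :
    P.σ (i + 1) = P.wIdx i ∧ P.wIdx (i + 1) = P.σ i + 1 := by
  have h3 := P.n3
  set S := P.σ i with hS
  set M := P.σ (i + 1) with hM
  have hMS : M ≠ S := Ne.symm (P.sigma_succ_ne i)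
  have hW2 := P.Wnat_ge_two i
  have hWn := P.Wnat_lt i
  have hW2' := P.Wnat_ge_two (i + 1)
  have hWn' := P.Wnat_lt (i + 1)
  set W := P.Wnat i with hW
  set W' := P.Wnat (i + 1) with hW'
  have hXneg : wedge (P.dir i) (P.E M) < 0 := hX
  have hmem : W ≤ (M - S).val := (P.U_edge_neg i M hMS).mp hXneg
  -- step 1 : M = wIdx i
  have hA : M = P.wIdx i := by
    by_contra hne
    have hvalW : (M - S).val ≠ W := by
      intro h
      apply hne
      have h1 : M - S = P.wIdx i - S := by
        rw [← P.cast_Wnat i]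
        exact Fin.ext (by rw [h, Fin.val_cast_of_lt (by omega)])
      have : M = (M - S) + S := by ring
      rw [this, h1]; ring
    have hge : W + 1 ≤ (M - S).val := by omega
    set j := M - 1 with hj
    have hjS : j - S = (M - S) - 1 := by rw [hj]; ring
    have hjSval : (j - S).val = (M - S).val - 1 := by
      rw [hjS]; exact sub_one_val _ (by omega)
    have hjneS : j ≠ S := ne_of_diff_val_pos (by omega)
    have hjneM : j ≠ M := by
      intro h
      apply P.fin_one_ne_zero'
      rw [hj] at h
      linear_combination -h
    have hneg1 : wedge (P.dir i) (P.E j) < 0 :=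
      (P.U_edge_neg i j hjneS).mpr (show W ≤ (j - S).val by omega)
    set l := P.σ.symm j with hl
    have hlE : P.σ l = j := P.σ.apply_symm_apply j
    have hl1 : l ≠ i := fun h => hjneS (by rw [← hlE, h])
    have hl2 : l ≠ i + 1 := fun h => hjneM (by rw [← hlE, h])
    have hpos2 : 0 < wedge (P.dir (i + 1)) (P.E j) := by
      have hdl : P.dir l = P.E j := by rw [P.dir_eq_E, hlE]
      have hiff := P.CB i l hl1 hl2 hX
      rw [hdl] at hiff
      exact hiff.mpr hneg1
    have hjM : (j - M).val = n - 1 := by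
      have hjm : j - M = -1 := by rw [hj]; ring
      rw [hjm, val_neg' 1 (P.fin_one_ne_zero'), P.one_val]
    have hfin : (j - M).val < W' := (P.U_edge (i + 1) j hjneM).mp hpos2
    omega
  -- now (M - S).val = W
  have hMSval : (M - S).val = W := by rw [hA]; rfl
  -- step 2a : n - W < W'
  have hMS0 : M - S ≠ 0 := by
    intro h
    rw [h] at hMSval
    simp at hMSval
    omega
  have hSM : (S - M).val = n - W := by
    have h1 : S - M = -(M - S) := by ring
    rw [h1, val_neg' _ hMS0, hMSval]
  have hposS : 0 < wedge (P.dir (i + 1)) (P.E S) := by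
    have hanti : wedge (P.dir (i + 1)) (P.E S) = - P.XX i := by
      unfold XX
      have hdirS : P.dir i = P.E S := P.dir_eq_E i
      rw [← hdirS]
      exact wedge_anti _ _
    rw [hanti]; linarith
  have hSneM : S ≠ M := Ne.symm hMS
  have h2a : n - W < W' := by
    have h : (S - M).val < W' := (P.U_edge (i + 1) S hSneM).mp hposS
    omega
  -- step 2b : W' ≤ n - W + 1
  have hposj3 : 0 < wedge (P.dir i) (P.E (S + 1)) := by
    rw [P.dir_eq_E]
    exact P.turn S
  have hj3neS : S + 1 ≠ S := P.add_one_ne S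
  have hj3neM : S + 1 ≠ M := by
    intro h
    have h1 : M - S = 1 := by linear_combination -h
    exact P.Wfin_ne_one i (by rw [← hA]; exact h1)
  have hneg3 : wedge (P.dir (i + 1)) (P.E (S + 1)) < 0 := by
    set l := P.σ.symm (S + 1) with hl
    have hlE : P.σ l = S + 1 := P.σ.apply_symm_apply _
    have hl1 : l ≠ i := fun h => hj3neS (by rw [← hlE, h])
    have hl2 : l ≠ i + 1 := fun h => hj3neM (by rw [← hlE, h])
    have hdl : P.dir l = P.E (S + 1) := by rw [P.dir_eq_E, hlE]
    have hiff := P.CB i l hl1 hl2 hX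
    rw [hdl] at hiff
    have hne : wedge (P.dir (i + 1)) (P.E (S + 1)) ≠ 0 := by
      rw [P.dirsucc_eq]
      exact P.np _ _ (Ne.symm hj3neM)
    rcases lt_trichotomy (wedge (P.dir (i + 1)) (P.E (S + 1))) 0 with h | h | h
    · exact h
    · exact absurd h hne
    · linarith [hiff.mp h]
  have hj3M : (S + 1 - M).val = n - W + 1 := by
    have h1 : S + 1 - M = -((M - S) - 1) := by ring
    have h2 : (M - S) - 1 = ((W - 1 : ℕ) : Fin n) := by
      have hMSc : M - S = ((W : ℕ) : Fin n) := by
        rw [← hMSval, Fin.cast_val_eq_self]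
      rw [hMSc, Nat.cast_sub (by omega)]
      simp
    rw [h1, h2, val_neg' _ (natCast_fin_ne_zero (by omega) (by omega)),
      Fin.val_cast_of_lt (by omega)]
    omega
  have h2b : W' ≤ n - W + 1 := by
    have h : W' ≤ (S + 1 - M).val := (P.U_edge_neg (i + 1) (S + 1) hj3neM).mp hneg3
    omega
  have hW'eq : W' = n - W + 1 := by omega
  refine ⟨hA, ?_⟩
  have e1 : P.wIdx (i + 1) = M + ((W' : ℕ) : Fin n) := (P.wIdx_eq (i + 1)).symm
  have e2 : M = S + ((W : ℕ) : Fin n) := by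
    have h0 : M = (M - S) + S := by ring
    rw [h0, ← hMSval, Fin.cast_val_eq_self]
    ring
  rw [e1, e2, hW'eq]
  have hc : ((W : ℕ) : Fin n) + ((n - W + 1 : ℕ) : Fin n) = 1 := by
    rw [← Nat.cast_add]
    have hw1 : W + (n - W + 1) = n + 1 := by omega
    rw [hw1, Nat.cast_add, Fin.natCast_self, Nat.cast_one, zero_add]
  rw [add_assoc, hc]

end ConvexPolygonSpokes

namespace ConvexPolygonSpokes
open PolyAux
open Fin.NatCast Fin.CommRing

variable {n : ℕ} [NeZero n] (P : ConvexPolygonSpokes n)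

noncomputable def Aq (i : Fin n) : ℝ := wedge (P.dir i) (P.a i)
noncomputable def Bq (i : Fin n) : ℝ := wedge (P.dir (i + 1)) (P.a i)

open Classical in
noncomputable def etaR (i : Fin n) : ℝ := if P.Hd i then 1 else -1

lemma wIdx_ne_sigma (i : Fin n) : P.wIdx i ≠ P.σ i := by
  intro h
  exact P.Wfin_ne_zero i (by rw [h]; exact sub_self _)

lemma wIdx_ne_sigma_succ (i : Fin n) : P.wIdx i ≠ P.σ i + 1 := by
  intro h
  exact P.Wfin_ne_one i (by rw [h]; ring)

lemma A_pos (i : Fin n) : 0 < P.Aq i := by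
  have h1 : P.a i = (2 : ℝ) • ((P.vertex (P.wIdx i) - P.vertex (P.σ i)) -
      (P.vertex (P.σ i + 1) - P.vertex (P.σ i))) := by
    unfold a w v
    congr 1
    abel
  have hd : P.vertex (P.σ i + 1) - P.vertex (P.σ i) = P.dir i := rfl
  unfold Aq
  rw [h1, wedge_smul_right, wedge_sub_right, hd, wedge_self, sub_zero]
  have := P.cx (P.σ i) (P.wIdx i) (P.wIdx_ne_sigma i) (P.wIdx_ne_sigma_succ i)
  rw [P.dir_eq_E]
  linarith

lemma Bq_of_pos (i : Fin n) (hX : 0 < P.XX i) : P.Bq i = P.Aq (i + 1) := by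
  obtain ⟨hm, hw⟩ := P.SA i hX
  have key : ∀ x : Fin n, wedge (P.dir (i+1)) (P.vertex x - P.vertex (P.σ (i+1) + 1))
      = wedge (P.dir (i+1)) (P.vertex x - P.vertex (P.σ (i+1))) := by
    intro x
    have hsplit : P.vertex x - P.vertex (P.σ (i+1) + 1)
        = (P.vertex x - P.vertex (P.σ (i+1))) -
          (P.vertex (P.σ (i+1) + 1) - P.vertex (P.σ (i+1))) := by abel
    have hd : P.vertex (P.σ (i+1) + 1) - P.vertex (P.σ (i+1)) = P.dir (i+1) := rfl
    rw [hsplit, wedge_sub_right, hd, wedge_self, sub_zero]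
  unfold Bq Aq a w v
  rw [wedge_smul_right, wedge_smul_right]
  rw [hw, key (P.wIdx i), ← hm]

lemma Bq_of_neg (i : Fin n) (hX : P.XX i < 0) : P.Bq i = - P.Aq (i + 1) := by
  obtain ⟨hm, hw⟩ := P.SB i hX
  have key : ∀ x : Fin n, wedge (P.dir (i+1)) (P.vertex x - P.vertex (P.σ (i+1) + 1))
      = wedge (P.dir (i+1)) (P.vertex x - P.vertex (P.σ (i+1))) := by
    intro x
    have hsplit : P.vertex x - P.vertex (P.σ (i+1) + 1)
        = (P.vertex x - P.vertex (P.σ (i+1))) -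
          (P.vertex (P.σ (i+1) + 1) - P.vertex (P.σ (i+1))) := by abel
    have hd : P.vertex (P.σ (i+1) + 1) - P.vertex (P.σ (i+1)) = P.dir (i+1) := rfl
    rw [hsplit, wedge_sub_right, hd, wedge_self, sub_zero]
  unfold Bq Aq a w v
  rw [wedge_smul_right, wedge_smul_right]
  rw [hw, key (P.σ i + 1), ← hm]
  rw [show P.vertex (P.σ (i + 1)) - P.vertex (P.σ i + 1)
      = -(P.vertex (P.σ i + 1) - P.vertex (P.σ (i + 1))) from by abel, wedge_neg_right]
  ring

lemma Bq_ne_zero (i : Fin n) : P.Bq i ≠ 0 := by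
  rcases lt_trichotomy (P.XX i) 0 with h | h | h
  · rw [P.Bq_of_neg i h]
    have hA := P.A_pos (i + 1)
    intro hc
    exact absurd (neg_eq_zero.mp hc) (ne_of_gt hA)
  · exact absurd h (P.XX_ne_zero i)
  · rw [P.Bq_of_pos i h]
    linarith [P.A_pos (i + 1)]

lemma succ_lt_iff (P : ConvexPolygonSpokes n) (i : Fin n) : (i < i + 1) ↔ ¬ (i + 1 = 0) := by
  have h3 := P.n3
  have hadd : (i + 1).val = (i.val + 1) % n := by rw [Fin.val_add, P.one_val]
  have hi := i.isLt
  rcases (by omega : i.val + 1 < n ∨ i.val + 1 = n) with hw | hw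
  · have hmod : (i.val + 1) % n = i.val + 1 := Nat.mod_eq_of_lt hw
    constructor
    · intro _ h0
      have hv : (i + 1).val = 0 := by rw [h0]; simp
      omega
    · intro _
      rw [Fin.lt_def, hadd, hmod]
      omega
  · have hmod : (i.val + 1) % n = 0 := by rw [hw, Nat.mod_self]
    have h0 : i + 1 = 0 := Fin.ext (by rw [hadd, hmod]; simp)
    constructor
    · intro hlt
      rw [Fin.lt_def, hadd, hmod] at hlt
      omega
    · intro hne
      exact absurd h0 hne

lemma XX_sign' (i : Fin n) :
    0 < P.XX i * ((if i + 1 = 0 then (-1:ℝ) else 1) * P.etaR i * P.etaR (i + 1)) := by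
  classical
  have hne := P.XX_ne_zero i
  have hiff : 0 < P.XX i ↔ ((i < i + 1) ↔ (P.Hd i ↔ P.Hd (i + 1))) :=
    P.SGN (fun h => P.add_one_ne i h.symm)
  have hord := P.succ_lt_iff i
  have hXcases : (0 < P.XX i ∧ (¬(i+1=0) ↔ (P.Hd i ↔ P.Hd (i+1)))) ∨
      (P.XX i < 0 ∧ ¬(¬(i+1=0) ↔ (P.Hd i ↔ P.Hd (i+1)))) := by
    rcases lt_trichotomy (P.XX i) 0 with h | h | h
    · right
      refine ⟨h, fun hc => ?_⟩
      rw [← hord] at hc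
      linarith [hiff.mpr hc]
    · exact absurd h hne
    · left
      exact ⟨h, by rw [← hord]; exact hiff.mp h⟩
  unfold etaR
  rcases hXcases with ⟨hp, hc⟩ | ⟨hp, hc⟩ <;> by_cases h0 : i + 1 = 0
  · have hH : ¬ (P.Hd i ↔ P.Hd (i + 1)) := fun h => (hc.mpr h) h0
    rw [if_pos h0]
    by_cases h1 : P.Hd i <;> by_cases h2 : P.Hd (i + 1) <;>
      simp only [h1, h2, if_true, if_false] <;>
      first
      | exact absurd (Iff.intro (fun _ => h2) (fun _ => h1)) hH
      | exact absurd (Iff.intro (fun ha => absurd ha h1) (fun hb => absurd hb h2)) hH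
      | exact absurd (hH.mp h1) h2
      | exact absurd (hH.mpr h2) h1
      | nlinarith [hp]
  · have hH : P.Hd i ↔ P.Hd (i + 1) := hc.mp h0
    rw [if_neg h0]
    by_cases h1 : P.Hd i <;> by_cases h2 : P.Hd (i + 1) <;>
      simp only [h1, h2, if_true, if_false] <;>
      first
      | exact absurd (Iff.intro (fun _ => h2) (fun _ => h1)) hH
      | exact absurd (Iff.intro (fun ha => absurd ha h1) (fun hb => absurd hb h2)) hH
      | exact absurd (hH.mp h1) h2
      | exact absurd (hH.mpr h2) h1
      | nlinarith [hp]
  · have hH : P.Hd i ↔ P.Hd (i + 1) := by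
      by_contra h
      exact hc ⟨fun hn => absurd h0 hn, fun hh => absurd hh h⟩
    rw [if_pos h0]
    by_cases h1 : P.Hd i <;> by_cases h2 : P.Hd (i + 1) <;>
      simp only [h1, h2, if_true, if_false] <;>
      first
      | exact absurd (Iff.intro (fun _ => h2) (fun _ => h1)) hH
      | exact absurd (Iff.intro (fun ha => absurd ha h1) (fun hb => absurd hb h2)) hH
      | exact absurd (hH.mp h1) h2
      | exact absurd (hH.mpr h2) h1
      | nlinarith [hp]
  · have hH : ¬ (P.Hd i ↔ P.Hd (i + 1)) := fun h => hc ⟨fun _ => h, fun _ => h0⟩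
    rw [if_neg h0]
    by_cases h1 : P.Hd i <;> by_cases h2 : P.Hd (i + 1) <;>
      simp only [h1, h2, if_true, if_false] <;>
      first
      | exact absurd (Iff.intro (fun _ => h2) (fun _ => h1)) hH
      | exact absurd (Iff.intro (fun ha => absurd ha h1) (fun hb => absurd hb h2)) hH
      | exact absurd (hH.mp h1) h2
      | exact absurd (hH.mpr h2) h1
      | nlinarith [hp]

lemma prod_XX_neg : (∏ i : Fin n, P.XX i) < 0 := by
  classical
  have h3 := P.n3
  have hpos : 0 < ∏ i : Fin n,
      (P.XX i * ((if i + 1 = 0 then (-1:ℝ) else 1) * P.etaR i * P.etaR (i + 1))) :=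
    Finset.prod_pos (fun i _ => P.XX_sign' i)
  rw [Finset.prod_mul_distrib] at hpos
  have h2 : (∏ i : Fin n, ((if i + 1 = 0 then (-1:ℝ) else 1) * P.etaR i * P.etaR (i + 1)))
      = -((∏ i : Fin n, P.etaR i) ^ 2) := by
    rw [Finset.prod_mul_distrib, Finset.prod_mul_distrib]
    have ha : (∏ i : Fin n, (if i + 1 = 0 then (-1:ℝ) else 1)) = -1 := by
      rw [Finset.prod_eq_single (-1 : Fin n)]
      · rw [if_pos (by ring)]
      · intro b _ hb
        rw [if_neg (fun hc => hb (eq_neg_of_add_eq_zero_left hc))]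
      · intro h
        exact absurd (Finset.mem_univ _) h
    have hb : (∏ i : Fin n, P.etaR (i + 1)) = ∏ i : Fin n, P.etaR i := by
      exact Fintype.prod_equiv (Equiv.addRight (1 : Fin n)) _ _ (fun i => rfl)
    rw [ha, hb]
    ring
  rw [h2] at hpos
  nlinarith [sq_nonneg (∏ i : Fin n, P.etaR i)]

lemma d_eq (i : Fin n) : P.d i = (P.Bq i / P.XX i) • P.dir i := by
  unfold d
  congr 1
  have h1 : wedge (P.dir (i + 1)) (P.dir i) = - P.XX i := wedge_anti _ _
  have h2 : wedge (P.dir (i + 1)) (P.a i) = P.Bq i := rfl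
  rw [h1, h2, div_neg, neg_div, neg_neg]

lemma c_pos (i : Fin n) : 0 < P.Bq i / P.XX i := by
  rcases lt_trichotomy (P.XX i) 0 with h | h | h
  · apply div_pos_of_neg_of_neg _ h
    rw [P.Bq_of_neg i h]
    linarith [P.A_pos (i + 1)]
  · exact absurd h (P.XX_ne_zero i)
  · apply div_pos _ h
    rw [P.Bq_of_pos i h]
    exact P.A_pos (i + 1)

lemma ad_eq (i : Fin n) : wedge (P.a i) (P.d i) = - ((P.Bq i / P.XX i) * P.Aq i) := by
  rw [P.d_eq i, wedge_smul_right]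
  have : wedge (P.a i) (P.dir i) = - P.Aq i := wedge_anti _ _
  rw [this]
  ring

lemma ad_neg (i : Fin n) : wedge (P.a i) (P.d i) < 0 := by
  rw [P.ad_eq i]
  have := P.c_pos i
  have := P.A_pos i
  nlinarith

lemma ad_ne_zero (i : Fin n) : wedge (P.a i) (P.d i) ≠ 0 := ne_of_lt (P.ad_neg i)

lemma dd_eq (i : Fin n) :
    wedge (P.d i) (P.d (i + 1)) = (P.Bq (i + 1) / P.XX (i + 1)) * P.Bq i := by
  rw [P.d_eq i, P.d_eq (i + 1), wedge_smul_right, wedge_smul_left]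
  have hc : P.Bq i / P.XX i * P.XX i = P.Bq i := div_mul_cancel₀ _ (P.XX_ne_zero i)
  calc P.Bq (i+1) / P.XX (i+1) * (P.Bq i / P.XX i * wedge (P.dir i) (P.dir (i+1)))
      = P.Bq (i+1) / P.XX (i+1) * (P.Bq i / P.XX i * P.XX i) := rfl
    _ = P.Bq (i + 1) / P.XX (i + 1) * P.Bq i := by rw [hc]

lemma dd_ne_zero (i : Fin n) : wedge (P.d i) (P.d (i + 1)) ≠ 0 := by
  rw [P.dd_eq i]
  exact mul_ne_zero (ne_of_gt (P.c_pos (i + 1))) (P.Bq_ne_zero i)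

/-- `dd i = - sign(X i) * ad (i+1)` -/
lemma DD_pos (i : Fin n) (hX : 0 < P.XX i) :
    wedge (P.d i) (P.d (i + 1)) = - wedge (P.a (i+1)) (P.d (i+1)) := by
  rw [P.dd_eq i, P.ad_eq (i + 1), P.Bq_of_pos i hX]
  ring

lemma DD_neg (i : Fin n) (hX : P.XX i < 0) :
    wedge (P.d i) (P.d (i + 1)) = wedge (P.a (i+1)) (P.d (i+1)) := by
  rw [P.dd_eq i, P.ad_eq (i + 1), P.Bq_of_neg i hX]
  ring

/-- the fundamental step identity -/
lemma V_id (i : Fin n) : P.a i + P.d i =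
    ((-(wedge (P.a i) (P.d i))) / wedge (P.d i) (P.d (i + 1))) • P.d (i + 1) := by
  have hperp : wedge (P.dir (i + 1)) (P.a i + P.d i) = 0 := by
    rw [wedge_add_right, P.d_eq i, wedge_smul_right]
    have h1 : wedge (P.dir (i + 1)) (P.dir i) = - P.XX i := wedge_anti _ _
    have h2 : wedge (P.dir (i + 1)) (P.a i) = P.Bq i := rfl
    rw [h1, h2]
    have hX := P.XX_ne_zero i
    field_simp
    ring
  obtain ⟨c, hc⟩ := eq_smul_of_wedge_eq_zero hperp (P.dir_ne_zero (i + 1))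
  have hcne : P.Bq (i + 1) / P.XX (i + 1) ≠ 0 := ne_of_gt (P.c_pos (i + 1))
  have hc' : P.a i + P.d i = (c / (P.Bq (i + 1) / P.XX (i + 1))) • P.d (i + 1) := by
    rw [P.d_eq (i + 1), smul_smul, div_mul_cancel₀ _ hcne]
    exact hc
  have hL : wedge (P.d i) (P.a i + P.d i) = - wedge (P.a i) (P.d i) := by
    rw [wedge_add_right, wedge_self, add_zero, wedge_anti]
  have hR : wedge (P.d i) (P.a i + P.d i)
      = (c / (P.Bq (i + 1) / P.XX (i + 1))) * wedge (P.d i) (P.d (i + 1)) := by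
    rw [hc', wedge_smul_right]
  have hddne := P.dd_ne_zero i
  rw [hL] at hR
  have hμ : c / (P.Bq (i + 1) / P.XX (i + 1))
      = (-(wedge (P.a i) (P.d i))) / wedge (P.d i) (P.d (i + 1)) := by
    rw [eq_div_iff hddne]
    linarith [hR]
  rw [hμ] at hc'
  exact hc'

end ConvexPolygonSpokes

namespace ConvexPolygonSpokes
open PolyAux
open Fin.NatCast Fin.CommRing

variable {n : ℕ} [NeZero n] (P : ConvexPolygonSpokes n)

lemma abs_dd (i : Fin n) : |wedge (P.d i) (P.d (i + 1))| = |wedge (P.a (i+1)) (P.d (i+1))| := by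
  rcases lt_trichotomy (P.XX i) 0 with h | h | h
  · rw [P.DD_neg i h]
  · exact absurd h (P.XX_ne_zero i)
  · rw [P.DD_pos i h, abs_neg]

lemma cast_succ_fin (P : ConvexPolygonSpokes n) (k : ℕ) : ((k + 1 : ℕ) : Fin n) = ((k : ℕ) : Fin n) + 1 := by
  push_cast
  ring

lemma forward_dir (h : P.SystemHasRatSolution) :
    Commensurate (fun i : Fin n => |wedge (P.a i) (P.d i)|) := by
  classical
  obtain ⟨t, hsys, hfin⟩ := h
  have h3 := P.n3
  set T : Fin n → ℚ := fun i => if i = 0 then 1 else t i with hT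
  have key : ∀ k : ℕ, k ≤ n - 1 → ((T ((k:ℕ):Fin n) : ℝ) ≠ 0 ∧
      |(T ((k:ℕ):Fin n) : ℝ)| * |wedge (P.a ((k:ℕ):Fin n)) (P.d ((k:ℕ):Fin n))| =
      |wedge (P.a 0) (P.d 0)|) := by
    intro k
    induction k with
    | zero =>
      intro _
      constructor
      · simp [hT]
      · norm_num [hT]
    | succ k ih =>
      intro hk
      have hkn : k ≤ n - 1 := by omega
      have hca : ((k + 1 : ℕ) : Fin n) = ((k:ℕ) : Fin n) + 1 := P.cast_succ_fin k
      have hvalk : ((k:ℕ):Fin n).val = k := Fin.val_cast_of_lt (by omega)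
      have hvalk1 : ((k+1:ℕ):Fin n).val = k+1 := Fin.val_cast_of_lt (by omega)
      have hpos1 : (0 : Fin n) < ((k+1:ℕ):Fin n) := by
        rw [Fin.lt_def, hvalk1]; simp
      have heq1 := hsys _ hpos1
      have hTk1 : T ((k+1:ℕ):Fin n) = t ((k+1:ℕ):Fin n) := by
        rw [hT]
        simp only
        rw [if_neg]
        intro hc
        rw [hc] at hvalk1
        simp at hvalk1
      have habsdd : |wedge (P.d ((k:ℕ):Fin n)) (P.d (((k:ℕ):Fin n) + 1))|
          = |wedge (P.a ((k+1:ℕ):Fin n)) (P.d ((k+1:ℕ):Fin n))| := by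
        rw [hca]; exact P.abs_dd ((k:ℕ):Fin n)
      rcases Nat.eq_zero_or_pos k with hk0 | hk0
      · subst hk0
        have hIoo : Finset.Ioo (0:Fin n) ((0+1:ℕ):Fin n) = ∅ := by
          ext x
          simp only [Finset.mem_Ioo, Finset.notMem_empty, iff_false, not_and, Fin.lt_def]
          intro hx
          rw [hvalk1]
          simp only [Fin.val_zero] at hx
          omega
        rw [hIoo] at heq1
        simp only [Finset.sum_empty, add_zero] at heq1
        have hw := congrArg (fun z => wedge (P.d 0) z) heq1
        rw [wedge_add_right, wedge_self, zero_add, wedge_smul_right] at hw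
        have hda : wedge (P.d 0) (P.a 0) = - wedge (P.a 0) (P.d 0) := wedge_anti _ _
        rw [hda] at hw
        -- hw : -ad 0 = t • wedge (d 0) (d cast1)
        have hidx : ((0+1:ℕ):Fin n) = (0:Fin n) + 1 := by norm_num
        rw [hidx] at hw
        have hta : (t ((0+1:ℕ):Fin n) : ℝ) ≠ 0 := by
          rw [hidx]
          intro hc
          rw [hc, zero_mul] at hw
          exact P.ad_ne_zero 0 (by linarith)
        have habs : |(t ((0+1:ℕ):Fin n) : ℝ)| * |wedge (P.d 0) (P.d ((0:Fin n)+1))|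
            = |wedge (P.a 0) (P.d 0)| := by
          rw [hidx, ← abs_mul, ← hw, abs_neg]
        rw [hTk1]
        refine ⟨hta, ?_⟩
        have hdd0 : |wedge (P.d 0) (P.d ((0:Fin n) + 1))|
            = |wedge (P.a ((0+1:ℕ):Fin n)) (P.d ((0+1:ℕ):Fin n))| := by
          rw [hidx]
          exact P.abs_dd 0
        rw [← hdd0, habs]
      · -- k ≥ 1
        have hposk : (0 : Fin n) < ((k:ℕ):Fin n) := by
          rw [Fin.lt_def, hvalk]; simp only [Fin.val_zero]; omega
        have heqk := hsys _ hposk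
        obtain ⟨ihne, ihabs⟩ := ih hkn
        have hTk : T ((k:ℕ):Fin n) = t ((k:ℕ):Fin n) := by
          rw [hT]
          simp only
          rw [if_neg]
          intro hc
          rw [hc] at hvalk
          simp at hvalk
          omega
        rw [hTk] at ihne ihabs
        have hIoo : Finset.Ioo (0:Fin n) ((k+1:ℕ):Fin n)
            = insert ((k:ℕ):Fin n) (Finset.Ioo 0 ((k:ℕ):Fin n)) := by
          ext x
          simp only [Finset.mem_Ioo, Finset.mem_insert, Fin.lt_def, hvalk1, hvalk, Fin.val_zero]
          constructor
          · rintro ⟨h1, h2⟩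
            by_cases hx : x.val = k
            · left; exact Fin.ext (by rw [hvalk, hx])
            · right; exact ⟨h1, by omega⟩
          · rintro (hx | ⟨h1, h2⟩)
            · subst hx
              rw [hvalk]
              omega
            · exact ⟨h1, by omega⟩
        rw [hIoo, Finset.sum_insert (by simp [Finset.mem_Ioo])] at heq1
        have hstep : (t ((k+1:ℕ):Fin n) : ℝ) • P.d ((k+1:ℕ):Fin n)
            = (t ((k:ℕ):Fin n) : ℝ) • P.d ((k:ℕ):Fin n)
              + (t ((k:ℕ):Fin n):ℝ) • P.a ((k:ℕ):Fin n) := by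
          rw [← heq1, ← heqk]
          abel
        have hw := congrArg (fun z => wedge (P.d ((k:ℕ):Fin n)) z) hstep
        rw [wedge_smul_right, wedge_add_right, wedge_smul_right, wedge_smul_right,
          wedge_self, mul_zero, zero_add] at hw
        have hda : wedge (P.d ((k:ℕ):Fin n)) (P.a ((k:ℕ):Fin n))
            = - wedge (P.a ((k:ℕ):Fin n)) (P.d ((k:ℕ):Fin n)) := wedge_anti _ _
        rw [hda] at hw
        -- hw : t_{k+1} * wedge (d k) (d (k+1cast)) = t_k * (- ad k)
        have hdk1 : P.d ((k+1:ℕ):Fin n) = P.d (((k:ℕ):Fin n) + 1) := by rw [hca]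
        rw [hdk1] at hw
        have hRHSne : (t ((k:ℕ):Fin n):ℝ) * (-(wedge (P.a ((k:ℕ):Fin n)) (P.d ((k:ℕ):Fin n)))) ≠ 0 :=
          mul_ne_zero ihne (by simpa using P.ad_ne_zero ((k:ℕ):Fin n))
        have hta : (t ((k+1:ℕ):Fin n) : ℝ) ≠ 0 := by
          intro hc
          rw [hc, zero_mul] at hw
          exact hRHSne hw.symm
        rw [hTk1]
        refine ⟨hta, ?_⟩
        have habs := congrArg (fun z => |z|) hw
        simp only [abs_mul, abs_neg] at habs
        rw [habsdd] at habs
        -- habs : |t_{k+1}| * |ad (k+1)| = |t_k| * |ad k|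
        rw [habs]
        exact ihabs
  have keyF : ∀ i : Fin n, (T i : ℝ) ≠ 0 ∧
      |(T i : ℝ)| * |wedge (P.a i) (P.d i)| = |wedge (P.a 0) (P.d 0)| := by
    intro i
    have hi := i.isLt
    have := key i.val (by omega)
    rwa [Fin.cast_val_eq_self] at this
  constructor
  · intro i
    simp only
    exact abs_ne_zero.mpr (P.ad_ne_zero i)
  · intro i j
    obtain ⟨hti, habsi⟩ := keyF i
    obtain ⟨htj, habsj⟩ := keyF j
    refine ⟨|T j| / |T i|, ?_⟩
    have hcast : ((|T j| / |T i| : ℚ) : ℝ) = |(T j:ℝ)| / |(T i:ℝ)| := by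
      push_cast
      rfl
    simp only [hcast]
    have h1 : |(T i:ℝ)| ≠ 0 := abs_ne_zero.mpr hti
    rw [div_mul_eq_mul_div, eq_div_iff h1]
    calc |wedge (P.a i) (P.d i)| * |(T i:ℝ)|
        = |(T i:ℝ)| * |wedge (P.a i) (P.d i)| := mul_comm _ _
      _ = |wedge (P.a 0) (P.d 0)| := habsi
      _ = |(T j:ℝ)| * |wedge (P.a j) (P.d j)| := habsj.symm

end ConvexPolygonSpokes

namespace ConvexPolygonSpokes
open PolyAux
open Fin.NatCast Fin.CommRing

variable {n : ℕ} [NeZero n] (P : ConvexPolygonSpokes n)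

open Classical in
noncomputable def SXR (k : ℕ) : ℝ := if 0 < P.XX ((k : ℕ) : Fin n) then 1 else -1

noncomputable def fR (k : ℕ) : ℝ :=
  (∏ j ∈ Finset.range k, P.SXR j) *
    (wedge (P.a 0) (P.d 0) / wedge (P.a ((k:ℕ):Fin n)) (P.d ((k:ℕ):Fin n)))

lemma prod_SXR_range : (∏ j ∈ Finset.range n, P.SXR j) = -1 := by
  classical
  have h1 : (∏ j ∈ Finset.range n, P.SXR j)
      = ∏ i : Fin n, (if 0 < P.XX i then (1:ℝ) else -1) := by
    rw [← Fin.prod_univ_eq_prod_range]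
    apply Finset.prod_congr rfl
    intro i _
    unfold SXR
    rw [Fin.cast_val_eq_self]
  have hX := P.prod_XX_neg
  have h2 : (∏ i : Fin n, P.XX i)
      = (∏ i : Fin n, (if 0 < P.XX i then (1:ℝ) else -1)) * ∏ i : Fin n, |P.XX i| := by
    rw [← Finset.prod_mul_distrib]
    apply Finset.prod_congr rfl
    intro i _
    by_cases h : 0 < P.XX i
    · rw [if_pos h, one_mul, abs_of_pos h]
    · have hn : P.XX i < 0 := lt_of_le_of_ne (not_lt.mp h) (P.XX_ne_zero i)
      rw [if_neg h, abs_of_neg hn]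
      ring
  have habs : 0 < ∏ i : Fin n, |P.XX i| :=
    Finset.prod_pos (fun i _ => abs_pos.mpr (P.XX_ne_zero i))
  set p := ∏ i : Fin n, (if 0 < P.XX i then (1:ℝ) else -1) with hp
  have hsq : p ^ 2 = 1 := by
    rw [hp, ← Finset.prod_pow]
    apply Finset.prod_eq_one
    intro i _
    by_cases h : 0 < P.XX i <;> simp [h]
  have hplt : p < 0 := by
    by_contra hc
    push_neg at hc
    nlinarith
  have hfac : (p + 1) * (p - 1) = 0 := by nlinarith
  rcases mul_eq_zero.mp hfac with h | h
  · rw [h1]; linarith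
  · linarith

lemma fR_zero : P.fR 0 = 1 := by
  unfold fR
  rw [Finset.prod_range_zero, one_mul, Nat.cast_zero, div_self (P.ad_ne_zero 0)]

lemma fR_succ (k : ℕ) :
    P.fR (k + 1) = P.fR k * (-(wedge (P.a ((k:ℕ):Fin n)) (P.d ((k:ℕ):Fin n)))
      / wedge (P.d ((k:ℕ):Fin n)) (P.d (((k:ℕ):Fin n) + 1))) := by
  classical
  have hca : ((k+1:ℕ):Fin n) = ((k:ℕ):Fin n) + 1 := P.cast_succ_fin k
  have hadne := P.ad_ne_zero ((k:ℕ):Fin n)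
  have hadne' := P.ad_ne_zero (((k:ℕ):Fin n) + 1)
  have had0 := P.ad_ne_zero 0
  unfold fR SXR
  rw [Finset.prod_range_succ, hca]
  rcases lt_trichotomy (P.XX ((k:ℕ):Fin n)) 0 with h | h | h
  · rw [if_neg (not_lt.mpr h.le), P.DD_neg _ h]
    field_simp
    try ring
  · exact absurd h (P.XX_ne_zero _)
  · rw [if_pos h, P.DD_pos _ h]
    field_simp
    try ring

lemma fR_n : P.fR n = -1 := by
  unfold fR
  rw [P.prod_SXR_range, Fin.natCast_self, div_self (P.ad_ne_zero 0)]
  ring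

lemma backward_dir (hcom : Commensurate (fun i : Fin n => |wedge (P.a i) (P.d i)|)) :
    P.SystemHasRatSolution := by
  classical
  have h3 := P.n3
  obtain ⟨hne, hrat⟩ := hcom
  have hq : ∀ i : Fin n, ∃ qq : ℚ,
      (qq : ℝ) = wedge (P.a 0) (P.d 0) / wedge (P.a i) (P.d i) := by
    intro i
    obtain ⟨qq, hqq⟩ := hrat 0 i
    refine ⟨qq, ?_⟩
    simp only at hqq
    have hi := P.ad_neg i
    have h0 := P.ad_neg 0
    rw [abs_of_neg hi, abs_of_neg h0, mul_neg] at hqq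
    rw [eq_div_iff (P.ad_ne_zero i)]
    linarith
  choose q hqspec using hq
  set εQ : ℕ → ℚ := fun k =>
    ∏ j ∈ Finset.range k, (if 0 < P.XX ((j:ℕ):Fin n) then (1:ℚ) else -1) with hεQ
  have hεcast : ∀ k : ℕ, ((εQ k : ℚ) : ℝ) = ∏ j ∈ Finset.range k, P.SXR j := by
    intro k
    rw [hεQ]
    rw [Rat.cast_prod]
    apply Finset.prod_congr rfl
    intro j _
    unfold SXR
    split <;> norm_num
  set t : Fin n → ℚ := fun i => εQ i.val * q i with ht
  have htcast : ∀ i : Fin n, (t i : ℝ) = P.fR i.val := by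
    intro i
    rw [ht]
    push_cast
    rw [hεcast, hqspec]
    unfold fR
    rw [Fin.cast_val_eq_self]
  -- main chain of equations
  have main : ∀ k : ℕ, 1 ≤ k → k ≤ n - 1 →
      P.d 0 + P.a 0 + ∑ j ∈ Finset.Ioo 0 ((k:ℕ):Fin n), (t j : ℝ) • P.a j
        = (t ((k:ℕ):Fin n) : ℝ) • P.d ((k:ℕ):Fin n) := by
    intro k
    induction k with
    | zero => intro h; omega
    | succ k ih =>
      intro _ hk1
      have hvalk1 : ((k+1:ℕ):Fin n).val = k+1 := Fin.val_cast_of_lt (by omega)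
      have hca : ((k+1:ℕ):Fin n) = ((k:ℕ):Fin n) + 1 := P.cast_succ_fin k
      have hf1 : (t ((k+1:ℕ):Fin n) : ℝ) = P.fR (k+1) := by
        rw [htcast, hvalk1]
      rcases Nat.eq_zero_or_pos k with hk0 | hk0
      · subst hk0
        have hIoo : Finset.Ioo (0:Fin n) ((0+1:ℕ):Fin n) = ∅ := by
          ext x
          simp only [Finset.mem_Ioo, Finset.notMem_empty, iff_false, not_and, Fin.lt_def,
            Fin.val_zero]
          intro hx
          rw [hvalk1]
          omega
        rw [hIoo, Finset.sum_empty, add_zero, hf1]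
        have hstep := P.fR_succ 0
        rw [P.fR_zero, one_mul] at hstep
        have hidx0 : ((0:ℕ):Fin n) = (0:Fin n) := by norm_num
        rw [hidx0] at hstep
        rw [hstep]
        have hV := P.V_id 0
        rw [hca, hidx0]
        rw [show P.d 0 + P.a 0 = P.a 0 + P.d 0 from add_comm _ _, hV]
      · have hih := ih (by omega) (by omega)
        have hvalk : ((k:ℕ):Fin n).val = k := Fin.val_cast_of_lt (by omega)
        have hIoo : Finset.Ioo (0:Fin n) ((k+1:ℕ):Fin n)
            = insert ((k:ℕ):Fin n) (Finset.Ioo 0 ((k:ℕ):Fin n)) := by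
          ext x
          simp only [Finset.mem_Ioo, Finset.mem_insert, Fin.lt_def, hvalk1, hvalk, Fin.val_zero]
          constructor
          · rintro ⟨h1, h2⟩
            by_cases hx : x.val = k
            · left; exact Fin.ext (by rw [hvalk, hx])
            · right; exact ⟨h1, by omega⟩
          · rintro (hx | ⟨h1, h2⟩)
            · subst hx
              rw [hvalk]
              omega
            · exact ⟨h1, by omega⟩
        rw [hIoo, Finset.sum_insert (by simp [Finset.mem_Ioo])]
        have hrearr : P.d 0 + P.a 0 +
            ((t ((k:ℕ):Fin n):ℝ) • P.a ((k:ℕ):Fin n)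
              + ∑ j ∈ Finset.Ioo 0 ((k:ℕ):Fin n), (t j : ℝ) • P.a j)
            = (P.d 0 + P.a 0 + ∑ j ∈ Finset.Ioo 0 ((k:ℕ):Fin n), (t j : ℝ) • P.a j)
              + (t ((k:ℕ):Fin n):ℝ) • P.a ((k:ℕ):Fin n) := by abel
        rw [hrearr, hih]
        have hcomb : (t ((k:ℕ):Fin n):ℝ) • P.d ((k:ℕ):Fin n)
            + (t ((k:ℕ):Fin n):ℝ) • P.a ((k:ℕ):Fin n)
            = (t ((k:ℕ):Fin n):ℝ) • (P.a ((k:ℕ):Fin n) + P.d ((k:ℕ):Fin n)) := by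
          rw [smul_add]
          abel
        rw [hcomb, P.V_id ((k:ℕ):Fin n), smul_smul, hf1, P.fR_succ k, hca]
        congr 1
        rw [htcast, hvalk]
  refine ⟨t, ?_, ?_⟩
  · intro i hi
    have hi1 : 1 ≤ i.val := by
      rw [Fin.lt_def, Fin.val_zero] at hi
      omega
    have hi2 := i.isLt
    have := main i.val hi1 (by omega)
    rwa [Fin.cast_val_eq_self] at this
  · set L : Fin n := ((n-1 : ℕ) : Fin n) with hL
    have hLval : L.val = n - 1 := Fin.val_cast_of_lt (by omega)
    have hIoi : Finset.Ioi (0:Fin n) = insert L (Finset.Ioo 0 L) := by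
      ext x
      simp only [Finset.mem_Ioi, Finset.mem_insert, Finset.mem_Ioo, Fin.lt_def, Fin.val_zero,
        hLval]
      have hx := x.isLt
      constructor
      · intro h0x
        by_cases hxL : x = L
        · left; exact hxL
        · right
          refine ⟨h0x, ?_⟩
          have hxv : x.val ≠ n - 1 := fun hc => hxL (Fin.ext (by rw [hc, hLval]))
          omega
      · rintro (hx | ⟨h1, _⟩)
        · subst hx
          rw [hLval]
          omega
        · exact h1
    rw [hIoi, Finset.sum_insert (by simp [Finset.mem_Ioo])]
    have hmL : P.d 0 + P.a 0 + ∑ j ∈ Finset.Ioo 0 L, (t j:ℝ) • P.a j = (t L:ℝ) • P.d L :=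
      main (n-1) (by omega) le_rfl
    have hrearr : P.d 0 + P.a 0 +
        ((t L:ℝ) • P.a L + ∑ j ∈ Finset.Ioo 0 L, (t j : ℝ) • P.a j)
        = (P.d 0 + P.a 0 + ∑ j ∈ Finset.Ioo 0 L, (t j : ℝ) • P.a j) + (t L:ℝ) • P.a L := by
      abel
    rw [hrearr, hmL]
    have hcomb : (t L:ℝ) • P.d L + (t L:ℝ) • P.a L = (t L:ℝ) • (P.a L + P.d L) := by
      rw [smul_add]
      abel
    rw [hcomb, P.V_id L, smul_smul]
    have hL1 : L + 1 = 0 := by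
      rw [hL, ← P.cast_succ_fin (n-1)]
      rw [show n - 1 + 1 = n by omega]
      exact Fin.natCast_self n
    have hcoef : (t L:ℝ) * (-(wedge (P.a L) (P.d L)) / wedge (P.d L) (P.d (L + 1))) = -1 := by
      have h1 : (t L : ℝ) = P.fR (n-1) := by rw [htcast, hLval]
      have h2 := P.fR_succ (n-1)
      rw [show n - 1 + 1 = n by omega, P.fR_n] at h2
      rw [h1]
      have hLL : ((n-1:ℕ):Fin n) = L := by rw [hL]
      rw [← hLL]
      exact h2.symm
    rw [hcoef, hL1]
    simp

end ConvexPolygonSpokes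

theorem system_iff_ad_commensurate {n : ℕ} [NeZero n] (P : ConvexPolygonSpokes n) :
    P.SystemHasRatSolution ↔
      Commensurate fun i : Fin n => |wedge (P.a i) (P.d i)| :=
  ⟨P.forward_dir, P.backward_dir⟩
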